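/- arXiv:1510.02008 — 5 statements merged into one kernel-verified Lean document; each statement's English description precedes it below -/
import Mathlib

section
/- Let α, β, p be complex numbers with Re α > 0, Re β > 0, p ≠ 0, p² ≠ β², and R₁ := (p² + β²)² − 4αβp² ≠ 0; set R₂ := (p² + β²)² + 4αβp² and Δ(δ) := R₁² sinh²((α+β)δ/2) − R₂² sinh²((α−β)δ/2). Then the function g₂₂(δ) = (e^{−(α+β)δ}/(2α(p² − β²)p))·[R₁ sinh((α+β)δ) + R₂ sinh((α−β)δ) + 2Δ(δ)/R₁] tends to R₁/(2α(p² − β²)p) as the real parameter δ → +∞. -/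
set_option maxHeartbeats 1000000


open Complex Filter

lemma csinh_eq (z : ℂ) : Complex.sinh z = (Complex.exp z - Complex.exp (-z)) / 2 := rfl

lemma exp_neg_tendsto_zero (c : ℂ) (hc : 0 < c.re) :
    Tendsto (fun δ : ℝ => Complex.exp (-c * (δ : ℂ))) atTop (nhds 0) := by
  rw [tendsto_zero_iff_norm_tendsto_zero]
  have h : ∀ δ : ℝ, ‖Complex.exp (-c * (δ : ℂ))‖ = Real.exp (-c.re * δ) := by
    intro δ
    rw [Complex.norm_exp]
    congr 1
    simp [Complex.mul_re]
  simp only [h]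
  have : Tendsto (fun δ : ℝ => -c.re * δ) atTop atBot := by
    exact tendsto_neg_atTop_atBot.comp ((tendsto_const_mul_atTop_of_pos hc).mpr tendsto_id)
      |>.congr (by intro x; simp)
  exact Real.tendsto_exp_atBot.comp this

lemma key_alg (r₁ r₂ c U V W Z : ℂ) (hr₁ : r₁ ≠ 0) (hW : U * W = 1) (hZ : V * Z = 1) :
    (r₁ + (r₂ / 2 - r₂ ^ 2 / (2 * r₁)) * (Z ^ 2 * Z ^ 2)
        + (-(r₂ / 2) - r₂ ^ 2 / (2 * r₁)) * (W ^ 2 * W ^ 2)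
        + (-r₁ + r₂ ^ 2 / r₁) * (W ^ 2 * Z ^ 2)) / c =
      W ^ 2 * Z ^ 2 / c *
        (r₁ * ((U ^ 2 * V ^ 2 - W ^ 2 * Z ^ 2) / 2)
          + r₂ * ((U ^ 2 * Z ^ 2 - V ^ 2 * W ^ 2) / 2)
          + 2 * (r₁ ^ 2 * ((U * V - W * Z) / 2) ^ 2
                - r₂ ^ 2 * ((U * Z - V * W) / 2) ^ 2) / r₁) := by
  linear_combination
    ((2 * Z ^ 4 * r₂ ^ 2 - 2 * Z ^ 4 * r₁ * r₂ - 4 * V * W ^ 2 * Z ^ 3 * r₂ ^ 2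
      + 4 * V * W ^ 2 * Z ^ 3 * r₁ ^ 2 - 4 * V ^ 2 * Z ^ 2 * r₁ ^ 2
      + 2 * U * W * Z ^ 4 * r₂ ^ 2 - 2 * U * W * Z ^ 4 * r₁ * r₂
      - 4 * U * V ^ 2 * W * Z ^ 2 * r₁ ^ 2) / (4 * r₁ * c)) * hW +
    ((-4 * r₁ ^ 2 - 4 * W ^ 2 * Z ^ 2 * r₂ ^ 2 + 4 * W ^ 2 * Z ^ 2 * r₁ ^ 2
      + 2 * W ^ 4 * r₂ ^ 2 + 2 * W ^ 4 * r₁ * r₂ - 4 * V * Z * r₁ ^ 2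
      + 2 * V * W ^ 4 * Z * r₂ ^ 2 + 2 * V * W ^ 4 * Z * r₁ * r₂) / (4 * r₁ * c)) * hZ +
    ((-(r₂ * Z ^ 2 * W ^ 4 * V ^ 2) / 2 + r₂ * Z ^ 4 * W ^ 2 * U ^ 2 / 2 - r₂ * Z ^ 4 / 2
      + r₂ * W ^ 4 / 2 + r₁ * Z ^ 2 * W ^ 2 + r₁ * Z ^ 2 * W ^ 2 * V ^ 2 * U ^ 2 / 2
      - r₁ * Z ^ 4 * W ^ 4 / 2 - r₁) / c) * (mul_inv_cancel₀ hr₁)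

/-- Limit of the (2,2) entry (22) of the matrix coefficient as the distance `δ` to the
boundary tends to `+∞`: `g₂₂(δ) → R₁/(2α(p² − β²)p)`, the whole-plane coefficient
`g₂(p,s)` of (27). -/
theorem stmt_8 (α β p : ℂ) (hα : 0 < α.re) (hβ : 0 < β.re) (hp : p ≠ 0)
    (hpβ : p ^ 2 ≠ β ^ 2)
    (hR₁ : (p ^ 2 + β ^ 2) ^ 2 - 4 * α * β * p ^ 2 ≠ 0) :
    Tendsto (fun δ : ℝ =>
        Complex.exp (-(α + β) * (δ : ℂ)) / (2 * α * (p ^ 2 - β ^ 2) * p) *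
          (((p ^ 2 + β ^ 2) ^ 2 - 4 * α * β * p ^ 2) * Complex.sinh ((α + β) * (δ : ℂ))
            + ((p ^ 2 + β ^ 2) ^ 2 + 4 * α * β * p ^ 2) * Complex.sinh ((α - β) * (δ : ℂ))
            + 2 * (((p ^ 2 + β ^ 2) ^ 2 - 4 * α * β * p ^ 2) ^ 2 *
                    Complex.sinh ((α + β) * (δ : ℂ) / 2) ^ 2
                  - ((p ^ 2 + β ^ 2) ^ 2 + 4 * α * β * p ^ 2) ^ 2 *
                    Complex.sinh ((α - β) * (δ : ℂ) / 2) ^ 2) /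
                ((p ^ 2 + β ^ 2) ^ 2 - 4 * α * β * p ^ 2)))
      atTop
      (nhds (((p ^ 2 + β ^ 2) ^ 2 - 4 * α * β * p ^ 2) /
        (2 * α * (p ^ 2 - β ^ 2) * p))) := by
  set R₁ : ℂ := (p ^ 2 + β ^ 2) ^ 2 - 4 * α * β * p ^ 2 with hR₁def
  set R₂ : ℂ := (p ^ 2 + β ^ 2) ^ 2 + 4 * α * β * p ^ 2 with hR₂def
  set C : ℂ := 2 * α * (p ^ 2 - β ^ 2) * p with hCdef
  set A : ℂ := R₂ / 2 - R₂ ^ 2 / (2 * R₁) with hAdef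
  set B : ℂ := -(R₂ / 2) - R₂ ^ 2 / (2 * R₁) with hBdef
  set D : ℂ := -R₁ + R₂ ^ 2 / R₁ with hDdef
  have key : ∀ δ : ℝ,
      (R₁ + A * Complex.exp (-(2 * β) * (δ : ℂ)) + B * Complex.exp (-(2 * α) * (δ : ℂ))
        + D * Complex.exp (-(α + β) * (δ : ℂ))) / C =
      Complex.exp (-(α + β) * (δ : ℂ)) / C *
          (R₁ * Complex.sinh ((α + β) * (δ : ℂ))
            + R₂ * Complex.sinh ((α - β) * (δ : ℂ))
            + 2 * (R₁ ^ 2 * Complex.sinh ((α + β) * (δ : ℂ) / 2) ^ 2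
                  - R₂ ^ 2 * Complex.sinh ((α - β) * (δ : ℂ) / 2) ^ 2) / R₁) := by
    intro δ
    set U : ℂ := Complex.exp (α * (δ : ℂ) / 2) with hUdef
    set V : ℂ := Complex.exp (β * (δ : ℂ) / 2) with hVdef
    set W : ℂ := Complex.exp (-(α * (δ : ℂ) / 2)) with hWdef
    set Z : ℂ := Complex.exp (-(β * (δ : ℂ) / 2)) with hZdef
    have hW : U * W = 1 := by rw [hUdef, hWdef, ← Complex.exp_add]; simp
    have hZ : V * Z = 1 := by rw [hVdef, hZdef, ← Complex.exp_add]; simp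
    have e1 : Complex.exp ((α + β) * (δ : ℂ)) = U ^ 2 * V ^ 2 := by
      rw [show (α + β) * (δ : ℂ) = (α * δ / 2 + α * δ / 2) + (β * δ / 2 + β * δ / 2) by ring,
        Complex.exp_add, Complex.exp_add, Complex.exp_add, ← hUdef, ← hVdef]; ring
    have e2 : Complex.exp (-(α + β) * (δ : ℂ)) = W ^ 2 * Z ^ 2 := by
      rw [show -(α + β) * (δ : ℂ) =
        (-(α * δ / 2) + -(α * δ / 2)) + (-(β * δ / 2) + -(β * δ / 2)) by ring,
        Complex.exp_add, Complex.exp_add, Complex.exp_add, ← hWdef, ← hZdef]; ring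
    have e2' : Complex.exp (-((α + β) * (δ : ℂ))) = W ^ 2 * Z ^ 2 := by
      rw [show -((α + β) * (δ : ℂ)) = -(α + β) * (δ : ℂ) by ring, e2]
    have e3 : Complex.exp ((α - β) * (δ : ℂ)) = U ^ 2 * Z ^ 2 := by
      rw [show (α - β) * (δ : ℂ) =
        (α * δ / 2 + α * δ / 2) + (-(β * δ / 2) + -(β * δ / 2)) by ring,
        Complex.exp_add, Complex.exp_add, Complex.exp_add, ← hUdef, ← hZdef]; ring
    have e4 : Complex.exp (-((α - β) * (δ : ℂ))) = V ^ 2 * W ^ 2 := by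
      rw [show -((α - β) * (δ : ℂ)) =
        (β * δ / 2 + β * δ / 2) + (-(α * δ / 2) + -(α * δ / 2)) by ring,
        Complex.exp_add, Complex.exp_add, Complex.exp_add, ← hVdef, ← hWdef]; ring
    have e5 : Complex.exp ((α + β) * (δ : ℂ) / 2) = U * V := by
      rw [show (α + β) * (δ : ℂ) / 2 = α * δ / 2 + β * δ / 2 by ring, Complex.exp_add]
    have e6 : Complex.exp (-((α + β) * (δ : ℂ) / 2)) = W * Z := by
      rw [show -((α + β) * (δ : ℂ) / 2) = -(α * δ / 2) + -(β * δ / 2) by ring,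
        Complex.exp_add, ← hWdef, ← hZdef]
    have e7 : Complex.exp ((α - β) * (δ : ℂ) / 2) = U * Z := by
      rw [show (α - β) * (δ : ℂ) / 2 = α * δ / 2 + -(β * δ / 2) by ring,
        Complex.exp_add, ← hUdef, ← hZdef]
    have e8 : Complex.exp (-((α - β) * (δ : ℂ) / 2)) = V * W := by
      rw [show -((α - β) * (δ : ℂ) / 2) = β * δ / 2 + -(α * δ / 2) by ring,
        Complex.exp_add, ← hVdef, ← hWdef]
    have e9 : Complex.exp (-(2 * β) * (δ : ℂ)) = Z ^ 2 * Z ^ 2 := by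
      rw [show -(2 * β) * (δ : ℂ) =
        (-(β * δ / 2) + -(β * δ / 2)) + (-(β * δ / 2) + -(β * δ / 2)) by ring,
        Complex.exp_add, Complex.exp_add, ← hZdef]; ring
    have e10 : Complex.exp (-(2 * α) * (δ : ℂ)) = W ^ 2 * W ^ 2 := by
      rw [show -(2 * α) * (δ : ℂ) =
        (-(α * δ / 2) + -(α * δ / 2)) + (-(α * δ / 2) + -(α * δ / 2)) by ring,
        Complex.exp_add, Complex.exp_add, ← hWdef]; ring
    rw [csinh_eq, csinh_eq, csinh_eq, csinh_eq,
      e1, e2, e2', e3, e4, e5, e6, e7, e8, e9, e10, hAdef, hBdef, hDdef]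
    exact key_alg R₁ R₂ C U V W Z hR₁ hW hZ
  have hlim : Tendsto (fun δ : ℝ =>
      (R₁ + A * Complex.exp (-(2 * β) * (δ : ℂ)) + B * Complex.exp (-(2 * α) * (δ : ℂ))
        + D * Complex.exp (-(α + β) * (δ : ℂ))) / C) atTop (nhds (R₁ / C)) := by
    have h1 : (0:ℝ) < (2 * β).re := by simp [Complex.mul_re]; positivity
    have h2 : (0:ℝ) < (2 * α).re := by simp [Complex.mul_re]; positivity
    have h3 : (0:ℝ) < (α + β).re := by simp [Complex.add_re]; positivity
    have := (((tendsto_const_nhds (x := R₁) (f := atTop (α := ℝ))).add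
      ((tendsto_const_nhds (x := A) (f := atTop (α := ℝ))).mul (exp_neg_tendsto_zero _ h1))).add
      ((tendsto_const_nhds (x := B) (f := atTop (α := ℝ))).mul (exp_neg_tendsto_zero _ h2))).add
      ((tendsto_const_nhds (x := D) (f := atTop (α := ℝ))).mul (exp_neg_tendsto_zero _ h3))
    simpa using this.div_const C
  exact hlim.congr key
end

section
/- Let 0 < c_s < c_l, 0 < V < c_s, and set α̂ = √(1 − V²/c_l²), β̂ = √(1 − V²/c_s²), v_l = V/c_l, v_s = V/c_s, R₀ = 4α̂β̂ − (1 + β̂²)², γ₁ = R₀/(2β̂v_s²). Let α̃, β̃ : ℝ → ℂ be functions such that for every real p, Re α̃(p) > 0, α̃(p)² = α̂²p² + 2iv_l p + 1, Re β̃(p) > 0, and β̃(p)² = β̂²p² + 2i(Vc_l/c_s²)p + c_l²/c_s². Define g̃₁(p) = R̃₁(p)/(2β̃(p)(p² − β̃(p)²)p) with R̃₁(p) = (p² + β̃(p)²)² − 4α̃(p)β̃(p)p². Then g̃₁(p) → −γ₁ as p → +∞ and g̃₁(p) → +γ₁ as p → −∞. -/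
open Complex Filter

lemma sqrt_branch {l : Filter ℝ} {f : ℝ → ℂ} {s : ℝ} (hs : 0 < s)
    (hre : ∀ᶠ p in l, 0 < (f p).re)
    (hsq : Tendsto (fun p => f p ^ 2) l (nhds ((s:ℂ)^2))) :
    Tendsto f l (nhds (s:ℂ)) := by
  rw [tendsto_iff_norm_sub_tendsto_zero]
  have h0 : Tendsto (fun p => ‖f p ^ 2 - (s:ℂ)^2‖ / s) l (nhds 0) := by
    have := (tendsto_iff_norm_sub_tendsto_zero.mp hsq).div_const s
    simpa using this
  refine squeeze_zero' (Eventually.of_forall fun p => norm_nonneg _) ?_ h0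
  filter_upwards [hre] with p hp
  rw [le_div_iff₀ hs]
  have hfac : f p ^ 2 - (s:ℂ)^2 = (f p - s) * (f p + s) := by ring
  have hb : (s:ℝ) ≤ ‖f p + (s:ℂ)‖ := by
    have h1 : s ≤ (f p + (s:ℂ)).re := by
      simp only [Complex.add_re, Complex.ofReal_re]
      linarith
    exact h1.trans (Complex.re_le_norm _)
  calc ‖f p - (s:ℂ)‖ * s ≤ ‖f p - (s:ℂ)‖ * ‖f p + (s:ℂ)‖ :=
        mul_le_mul_of_nonneg_left hb (norm_nonneg _)
    _ = ‖f p ^ 2 - (s:ℂ)^2‖ := by rw [hfac, norm_mul]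

lemma sq_div_lim {l : Filter ℝ} (hne : ∀ᶠ p in l, p ≠ 0)
    (hinv : Tendsto (fun p : ℝ => ((p:ℂ))⁻¹) l (nhds 0))
    (f : ℝ → ℂ) (a c1 c2 : ℂ)
    (hf : ∀ p : ℝ, f p ^ 2 = a * (p:ℂ)^2 + c1 * (p:ℂ) + c2) :
    Tendsto (fun p : ℝ => (f p / (p:ℂ))^2) l (nhds a) := by
  have key : Tendsto (fun p : ℝ => a + c1 * ((p:ℂ))⁻¹ + c2 * ((p:ℂ))⁻¹^2) l (nhds a) := by
    have h1 := hinv.const_mul c1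
    have h2 := (hinv.pow 2).const_mul c2
    simpa using (tendsto_const_nhds.add h1).add h2
  refine key.congr' ?_
  filter_upwards [hne] with p hp
  have hp' : (p:ℂ) ≠ 0 := Complex.ofReal_ne_zero.mpr hp
  rw [div_pow, hf p]
  field_simp

/-- Asymptotics (29) of the scaled scalar coefficient (28.2):
`g̃₁(p) → −γ₁` as `p → +∞` and `g̃₁(p) → +γ₁` as `p → −∞`, where
`γ₁ = R₀/(2β̂v_s²)`, `R₀ = 4α̂β̂ − (1 + β̂²)²`. -/
theorem stmt_9 (cl cs V : ℝ) (hcs : 0 < cs) (hcl : cs < cl) (hV0 : 0 < V) (hVs : V < cs)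
    (αt βt : ℝ → ℂ)
    (hαt : ∀ p : ℝ, 0 < (αt p).re ∧
      (αt p) ^ 2 = ((Real.sqrt (1 - V ^ 2 / cl ^ 2) : ℝ) : ℂ) ^ 2 * (p : ℂ) ^ 2
        + 2 * I * ((V / cl : ℝ) : ℂ) * (p : ℂ) + 1)
    (hβt : ∀ p : ℝ, 0 < (βt p).re ∧
      (βt p) ^ 2 = ((Real.sqrt (1 - V ^ 2 / cs ^ 2) : ℝ) : ℂ) ^ 2 * (p : ℂ) ^ 2
        + 2 * I * ((V * cl / cs ^ 2 : ℝ) : ℂ) * (p : ℂ) + ((cl ^ 2 / cs ^ 2 : ℝ) : ℂ)) :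
    Tendsto (fun p : ℝ =>
        (((p : ℂ) ^ 2 + (βt p) ^ 2) ^ 2 - 4 * αt p * βt p * (p : ℂ) ^ 2) /
          (2 * βt p * ((p : ℂ) ^ 2 - (βt p) ^ 2) * (p : ℂ)))
      atTop
      (nhds (-(((4 * Real.sqrt (1 - V ^ 2 / cl ^ 2) * Real.sqrt (1 - V ^ 2 / cs ^ 2)
          - (1 + Real.sqrt (1 - V ^ 2 / cs ^ 2) ^ 2) ^ 2) /
            (2 * Real.sqrt (1 - V ^ 2 / cs ^ 2) * (V / cs) ^ 2) : ℝ) : ℂ))) ∧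
    Tendsto (fun p : ℝ =>
        (((p : ℂ) ^ 2 + (βt p) ^ 2) ^ 2 - 4 * αt p * βt p * (p : ℂ) ^ 2) /
          (2 * βt p * ((p : ℂ) ^ 2 - (βt p) ^ 2) * (p : ℂ)))
      atBot
      (nhds (((4 * Real.sqrt (1 - V ^ 2 / cl ^ 2) * Real.sqrt (1 - V ^ 2 / cs ^ 2)
          - (1 + Real.sqrt (1 - V ^ 2 / cs ^ 2) ^ 2) ^ 2) /
            (2 * Real.sqrt (1 - V ^ 2 / cs ^ 2) * (V / cs) ^ 2) : ℝ) : ℂ)) := by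
  set αh := Real.sqrt (1 - V ^ 2 / cl ^ 2) with hαhdef
  set βh := Real.sqrt (1 - V ^ 2 / cs ^ 2) with hβhdef
  have hcl0 : 0 < cl := hcs.trans hcl
  have hVl : V < cl := hVs.trans hcl
  have h1l : 0 < 1 - V ^ 2 / cl ^ 2 := by
    rw [sub_pos, div_lt_one (by positivity)]
    nlinarith
  have h1s : 0 < 1 - V ^ 2 / cs ^ 2 := by
    rw [sub_pos, div_lt_one (by positivity)]
    nlinarith
  have hαh2 : αh ^ 2 = 1 - V ^ 2 / cl ^ 2 := Real.sq_sqrt h1l.le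
  have hβh2 : βh ^ 2 = 1 - V ^ 2 / cs ^ 2 := Real.sq_sqrt h1s.le
  have hαh0 : 0 < αh := Real.sqrt_pos.mpr h1l
  have hβh0 : 0 < βh := Real.sqrt_pos.mpr h1s
  have hb : 1 - βh ^ 2 = (V / cs) ^ 2 := by rw [hβh2]; field_simp; ring
  -- inverse tendsto
  have hinvT : Tendsto (fun p : ℝ => ((p:ℂ))⁻¹) atTop (nhds 0) := by
    rw [tendsto_zero_iff_norm_tendsto_zero]
    have : Tendsto (fun p : ℝ => |p|⁻¹) atTop (nhds 0) :=
      tendsto_inv_atTop_zero.comp tendsto_abs_atTop_atTop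
    simpa [Real.norm_eq_abs] using this
  have hinvB : Tendsto (fun p : ℝ => ((p:ℂ))⁻¹) atBot (nhds 0) := by
    rw [tendsto_zero_iff_norm_tendsto_zero]
    have : Tendsto (fun p : ℝ => |p|⁻¹) atBot (nhds 0) :=
      tendsto_inv_atTop_zero.comp tendsto_abs_atBot_atTop
    simpa [Real.norm_eq_abs] using this
  have hneT : ∀ᶠ p : ℝ in atTop, p ≠ 0 := eventually_ne_atTop 0
  have hneB : ∀ᶠ p : ℝ in atBot, p ≠ 0 := eventually_ne_atBot 0
  have hposT : ∀ᶠ p : ℝ in atTop, 0 < p := eventually_gt_atTop 0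
  have hnegB : ∀ᶠ p : ℝ in atBot, p < 0 := eventually_lt_atBot 0
  -- squares
  have hA2T := sq_div_lim hneT hinvT αt ((αh:ℂ)^2) (2 * I * ((V / cl : ℝ) : ℂ)) 1
    (fun p => (hαt p).2)
  have hA2B := sq_div_lim hneB hinvB αt ((αh:ℂ)^2) (2 * I * ((V / cl : ℝ) : ℂ)) 1
    (fun p => (hαt p).2)
  have hB2T := sq_div_lim hneT hinvT βt ((βh:ℂ)^2) (2 * I * ((V * cl / cs ^ 2 : ℝ) : ℂ))
    ((cl ^ 2 / cs ^ 2 : ℝ) : ℂ) (fun p => (hβt p).2)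
  have hB2B := sq_div_lim hneB hinvB βt ((βh:ℂ)^2) (2 * I * ((V * cl / cs ^ 2 : ℝ) : ℂ))
    ((cl ^ 2 / cs ^ 2 : ℝ) : ℂ) (fun p => (hβt p).2)
  -- tendsto of A, B at top
  have hreAT : ∀ᶠ p : ℝ in atTop, 0 < (αt p / (p:ℂ)).re := by
    filter_upwards [hposT] with p hp
    rw [Complex.div_ofReal_re]
    exact div_pos (hαt p).1 hp
  have hreBT : ∀ᶠ p : ℝ in atTop, 0 < (βt p / (p:ℂ)).re := by
    filter_upwards [hposT] with p hp
    rw [Complex.div_ofReal_re]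
    exact div_pos (hβt p).1 hp
  have hAT : Tendsto (fun p : ℝ => αt p / (p:ℂ)) atTop (nhds (αh:ℂ)) :=
    sqrt_branch hαh0 hreAT hA2T
  have hBT : Tendsto (fun p : ℝ => βt p / (p:ℂ)) atTop (nhds (βh:ℂ)) :=
    sqrt_branch hβh0 hreBT hB2T
  -- tendsto of A, B at bot
  have hreAB : ∀ᶠ p : ℝ in atBot, 0 < (-(αt p / (p:ℂ))).re := by
    filter_upwards [hnegB] with p hp
    rw [Complex.neg_re, Complex.div_ofReal_re]
    exact neg_pos.mpr (div_neg_of_pos_of_neg (hαt p).1 hp)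
  have hreBB : ∀ᶠ p : ℝ in atBot, 0 < (-(βt p / (p:ℂ))).re := by
    filter_upwards [hnegB] with p hp
    rw [Complex.neg_re, Complex.div_ofReal_re]
    exact neg_pos.mpr (div_neg_of_pos_of_neg (hβt p).1 hp)
  have hAB : Tendsto (fun p : ℝ => αt p / (p:ℂ)) atBot (nhds (-(αh:ℂ))) := by
    have h := sqrt_branch hαh0 hreAB (by simpa [neg_pow] using hA2B)
    simpa using h.neg
  have hBB : Tendsto (fun p : ℝ => βt p / (p:ℂ)) atBot (nhds (-(βh:ℂ))) := by
    have h := sqrt_branch hβh0 hreBB (by simpa [neg_pow] using hB2B)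
    simpa using h.neg
  -- rewrite of the main function
  have hrw : ∀ p : ℝ, p ≠ 0 →
      (((p : ℂ) ^ 2 + (βt p) ^ 2) ^ 2 - 4 * αt p * βt p * (p : ℂ) ^ 2) /
        (2 * βt p * ((p : ℂ) ^ 2 - (βt p) ^ 2) * (p : ℂ))
      = ((1 + (βt p / p) ^ 2) ^ 2 - 4 * (αt p / p) * (βt p / p)) /
        (2 * (βt p / p) * (1 - (βt p / p) ^ 2)) := by
    intro p hp
    have hp' : (p:ℂ) ≠ 0 := Complex.ofReal_ne_zero.mpr hp
    have hp4 : ((p:ℂ))^4 ≠ 0 := pow_ne_zero _ hp'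
    have e1 : ((p : ℂ) ^ 2 + (βt p) ^ 2) ^ 2 - 4 * αt p * βt p * (p : ℂ) ^ 2
        = (p:ℂ)^4 * ((1 + (βt p / p) ^ 2) ^ 2 - 4 * (αt p / p) * (βt p / p)) := by
      field_simp
    have e2 : 2 * βt p * ((p : ℂ) ^ 2 - (βt p) ^ 2) * (p : ℂ)
        = (p:ℂ)^4 * (2 * (βt p / p) * (1 - (βt p / p) ^ 2)) := by
      field_simp
    rw [e1, e2, mul_div_mul_left _ _ hp4]
  -- nonzero denominators
  have hRden : (2 * βh * (1 - βh ^ 2) : ℝ) ≠ 0 := by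
    rw [hb]; positivity
  have hdenC : (2 * (βh:ℂ) * (1 - (βh:ℂ) ^ 2)) ≠ 0 := by
    have := Complex.ofReal_ne_zero.mpr hRden
    push_cast at this
    convert this using 2 <;> push_cast
  constructor
  · -- atTop
    have hlim : Tendsto (fun p : ℝ =>
        ((1 + (βt p / p) ^ 2) ^ 2 - 4 * (αt p / p) * (βt p / p)) /
          (2 * (βt p / p) * (1 - (βt p / p) ^ 2))) atTop
        (nhds (((1 + (βh:ℂ) ^ 2) ^ 2 - 4 * (αh:ℂ) * (βh:ℂ)) /
          (2 * (βh:ℂ) * (1 - (βh:ℂ) ^ 2)))) := by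
      refine Tendsto.div ?_ ?_ hdenC
      · exact ((tendsto_const_nhds.add (hBT.pow 2)).pow 2).sub
          ((hAT.const_mul 4).mul hBT)
      · exact (hBT.const_mul 2).mul (tendsto_const_nhds.sub (hBT.pow 2))
    have heq : (((1 + (βh:ℂ) ^ 2) ^ 2 - 4 * (αh:ℂ) * (βh:ℂ)) /
          (2 * (βh:ℂ) * (1 - (βh:ℂ) ^ 2)))
        = -(((4 * αh * βh - (1 + βh ^ 2) ^ 2) / (2 * βh * (V / cs) ^ 2) : ℝ) : ℂ) := by
      have hbC : (1:ℂ) - (βh:ℂ) ^ 2 = (((V / cs : ℝ)) : ℂ) ^ 2 := by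
        exact_mod_cast congrArg (fun x : ℝ => (x : ℂ)) hb
      rw [hbC]
      push_cast
      rw [← neg_div]
      ring
    rw [heq] at hlim
    refine Tendsto.congr' ?_ hlim
    filter_upwards [hneT] with p hp
    exact (hrw p hp).symm
  · -- atBot
    have hdenC2 : (2 * (-(βh:ℂ)) * (1 - (-(βh:ℂ)) ^ 2)) ≠ 0 := by
      intro h; exact hdenC (by linear_combination -h)
    have hlim : Tendsto (fun p : ℝ =>
        ((1 + (βt p / p) ^ 2) ^ 2 - 4 * (αt p / p) * (βt p / p)) /
          (2 * (βt p / p) * (1 - (βt p / p) ^ 2))) atBot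
        (nhds (((1 + (-(βh:ℂ)) ^ 2) ^ 2 - 4 * (-(αh:ℂ)) * (-(βh:ℂ))) /
          (2 * (-(βh:ℂ)) * (1 - (-(βh:ℂ)) ^ 2)))) := by
      refine Tendsto.div ?_ ?_ hdenC2
      · exact ((tendsto_const_nhds.add (hBB.pow 2)).pow 2).sub
          ((hAB.const_mul 4).mul hBB)
      · exact (hBB.const_mul 2).mul (tendsto_const_nhds.sub (hBB.pow 2))
    have heq2 : (((1 + (-(βh:ℂ)) ^ 2) ^ 2 - 4 * (-(αh:ℂ)) * (-(βh:ℂ))) /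
          (2 * (-(βh:ℂ)) * (1 - (-(βh:ℂ)) ^ 2)))
        = (((4 * αh * βh - (1 + βh ^ 2) ^ 2) / (2 * βh * (V / cs) ^ 2) : ℝ) : ℂ) := by
      have hbC : (1:ℂ) - (βh:ℂ) ^ 2 = (((V / cs : ℝ)) : ℂ) ^ 2 := by
        exact_mod_cast congrArg (fun x : ℝ => (x : ℂ)) hb
      have h1 : (1 + (-(βh:ℂ)) ^ 2) ^ 2 - 4 * (-(αh:ℂ)) * (-(βh:ℂ))
          = (1 + (βh:ℂ) ^ 2) ^ 2 - 4 * (αh:ℂ) * (βh:ℂ) := by ring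
      have h2 : 2 * (-(βh:ℂ)) * (1 - (-(βh:ℂ)) ^ 2)
          = -(2 * (βh:ℂ) * (1 - (βh:ℂ) ^ 2)) := by ring
      rw [h1, h2, div_neg, hbC]
      push_cast
      rw [← neg_div]
      ring
    rw [heq2] at hlim
    refine Tendsto.congr' ?_ hlim
    filter_upwards [hneB] with p hp
    exact (hrw p hp).symm
end

section
/- Let 0 < c_s < c_l, 0 < V < c_s, and set α̂ = √(1 − V²/c_l²), β̂ = √(1 − V²/c_s²), v_l = V/c_l, v_s = V/c_s, R₀ = 4α̂β̂ − (1 + β̂²)², γ₂ = R₀/(2α̂v_s²). Let α̃, β̃ : ℝ → ℂ be functions such that for every real p, Re α̃(p) > 0, α̃(p)² = α̂²p² + 2iv_l p + 1, Re β̃(p) > 0, and β̃(p)² = β̂²p² + 2i(Vc_l/c_s²)p + c_l²/c_s². Define g̃₂(p) = R̃₁(p)/(2α̃(p)(p² − β̃(p)²)p) with R̃₁(p) = (p² + β̃(p)²)² − 4α̃(p)β̃(p)p². Then g̃₂(p) → −γ₂ as p → +∞ and g̃₂(p) → +γ₂ as p → −∞. -/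
open Complex Filter

/-- If `Re f > 0` eventually and `f² → w²` with `w > 0` real, then `f → w`. -/
lemma aux_sqrt_tendsto {l : Filter ℝ} {f : ℝ → ℂ} {w : ℝ} (hw : 0 < w)
    (hre : ∀ᶠ p in l, 0 < (f p).re)
    (hsq : Tendsto (fun p => f p ^ 2) l (nhds ((w : ℂ) ^ 2))) :
    Tendsto f l (nhds (w : ℂ)) := by
  rw [tendsto_iff_norm_sub_tendsto_zero] at hsq ⊢
  have key : ∀ᶠ p in l, ‖f p - (w : ℂ)‖ ≤ ‖f p ^ 2 - (w : ℂ) ^ 2‖ / w := by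
    filter_upwards [hre] with p hp
    have h1 : (w : ℝ) ≤ ‖f p + (w : ℂ)‖ := by
      calc (w : ℝ) ≤ (f p + (w : ℂ)).re := by simp; linarith
        _ ≤ ‖f p + (w : ℂ)‖ := Complex.re_le_norm _
        _ = ‖f p + (w : ℂ)‖ := rfl
    have h2 : ‖f p - (w : ℂ)‖ * w ≤ ‖f p - (w : ℂ)‖ * ‖f p + (w : ℂ)‖ :=
      mul_le_mul_of_nonneg_left h1 (norm_nonneg _)
    rw [← norm_mul] at h2
    have h3 : (f p - (w : ℂ)) * (f p + (w : ℂ)) = f p ^ 2 - (w : ℂ) ^ 2 := by ring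
    rw [h3] at h2
    rw [le_div_iff₀ hw]
    exact h2
  have h0 : Tendsto (fun p => ‖f p ^ 2 - (w : ℂ) ^ 2‖ / w) l (nhds 0) := by
    simpa using hsq.div_const w
  exact squeeze_zero' (Eventually.of_forall fun p => norm_nonneg _) key h0

lemma aux_inv_atBot : Tendsto (fun p : ℝ => p⁻¹) atBot (nhds 0) := by
  have h1 : Tendsto (fun p : ℝ => (-p)⁻¹) atBot (nhds 0) :=
    tendsto_inv_atTop_zero.comp tendsto_neg_atBot_atTop
  have h2 := h1.neg
  rw [neg_zero] at h2
  exact h2.congr fun p => by rw [inv_neg, neg_neg]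

/-- Asymptotics (29) of the scaled scalar coefficient (28.2):
`g̃₂(p) → −γ₂` as `p → +∞` and `g̃₂(p) → +γ₂` as `p → −∞`, where
`γ₂ = R₀/(2α̂v_s²)`, `R₀ = 4α̂β̂ − (1 + β̂²)²`. -/
theorem stmt_10 (cl cs V : ℝ) (hcs : 0 < cs) (hcl : cs < cl) (hV0 : 0 < V) (hVs : V < cs)
    (αt βt : ℝ → ℂ)
    (hαt : ∀ p : ℝ, 0 < (αt p).re ∧
      (αt p) ^ 2 = ((Real.sqrt (1 - V ^ 2 / cl ^ 2) : ℝ) : ℂ) ^ 2 * (p : ℂ) ^ 2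
        + 2 * I * ((V / cl : ℝ) : ℂ) * (p : ℂ) + 1)
    (hβt : ∀ p : ℝ, 0 < (βt p).re ∧
      (βt p) ^ 2 = ((Real.sqrt (1 - V ^ 2 / cs ^ 2) : ℝ) : ℂ) ^ 2 * (p : ℂ) ^ 2
        + 2 * I * ((V * cl / cs ^ 2 : ℝ) : ℂ) * (p : ℂ) + ((cl ^ 2 / cs ^ 2 : ℝ) : ℂ)) :
    Tendsto (fun p : ℝ =>
        (((p : ℂ) ^ 2 + (βt p) ^ 2) ^ 2 - 4 * αt p * βt p * (p : ℂ) ^ 2) /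
          (2 * αt p * ((p : ℂ) ^ 2 - (βt p) ^ 2) * (p : ℂ)))
      atTop
      (nhds (-(((4 * Real.sqrt (1 - V ^ 2 / cl ^ 2) * Real.sqrt (1 - V ^ 2 / cs ^ 2)
          - (1 + Real.sqrt (1 - V ^ 2 / cs ^ 2) ^ 2) ^ 2) /
            (2 * Real.sqrt (1 - V ^ 2 / cl ^ 2) * (V / cs) ^ 2) : ℝ) : ℂ))) ∧
    Tendsto (fun p : ℝ =>
        (((p : ℂ) ^ 2 + (βt p) ^ 2) ^ 2 - 4 * αt p * βt p * (p : ℂ) ^ 2) /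
          (2 * αt p * ((p : ℂ) ^ 2 - (βt p) ^ 2) * (p : ℂ)))
      atBot
      (nhds (((4 * Real.sqrt (1 - V ^ 2 / cl ^ 2) * Real.sqrt (1 - V ^ 2 / cs ^ 2)
          - (1 + Real.sqrt (1 - V ^ 2 / cs ^ 2) ^ 2) ^ 2) /
            (2 * Real.sqrt (1 - V ^ 2 / cl ^ 2) * (V / cs) ^ 2) : ℝ) : ℂ)) := by
  set a := Real.sqrt (1 - V ^ 2 / cl ^ 2) with ha_def
  set b := Real.sqrt (1 - V ^ 2 / cs ^ 2) with hb_def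
  have hcl0 : 0 < cl := hcs.trans hcl
  have hVl : V < cl := hVs.trans hcl
  have h1l : 0 < 1 - V ^ 2 / cl ^ 2 := by
    rw [sub_pos, div_lt_one (by positivity)]
    nlinarith
  have h1s : 0 < 1 - V ^ 2 / cs ^ 2 := by
    rw [sub_pos, div_lt_one (by positivity)]
    nlinarith
  have ha : 0 < a := Real.sqrt_pos.mpr h1l
  have hb : 0 < b := Real.sqrt_pos.mpr h1s
  have hb2 : b ^ 2 = 1 - V ^ 2 / cs ^ 2 := Real.sq_sqrt h1s.le
  have hbt : 1 - b ^ 2 = (V / cs) ^ 2 := by rw [hb2]; field_simp; ring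
  have hbt0 : (0:ℝ) < 1 - b ^ 2 := by rw [hbt]; positivity
  -- eventual rewriting of the function
  have hrw : ∀ p : ℝ, p ≠ 0 →
      (((p : ℂ) ^ 2 + (βt p) ^ 2) ^ 2 - 4 * αt p * βt p * (p : ℂ) ^ 2) /
          (2 * αt p * ((p : ℂ) ^ 2 - (βt p) ^ 2) * (p : ℂ))
      = ((1 + (βt p / (p : ℂ)) ^ 2) ^ 2 - 4 * (αt p / (p : ℂ)) * (βt p / (p : ℂ))) /
          (2 * (αt p / (p : ℂ)) * (1 - (βt p / (p : ℂ)) ^ 2)) := by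
    intro p hp
    have hpc : (p : ℂ) ≠ 0 := Complex.ofReal_ne_zero.mpr hp
    have h4 : ((p : ℂ) ^ 4)⁻¹ ≠ 0 := inv_ne_zero (pow_ne_zero 4 hpc)
    have hnum : (1 + (βt p / (p : ℂ)) ^ 2) ^ 2 - 4 * (αt p / (p : ℂ)) * (βt p / (p : ℂ))
        = (((p : ℂ) ^ 2 + (βt p) ^ 2) ^ 2 - 4 * αt p * βt p * (p : ℂ) ^ 2) * ((p : ℂ) ^ 4)⁻¹ := by
      field_simp
    have hden : 2 * (αt p / (p : ℂ)) * (1 - (βt p / (p : ℂ)) ^ 2)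
        = (2 * αt p * ((p : ℂ) ^ 2 - (βt p) ^ 2) * (p : ℂ)) * ((p : ℂ) ^ 4)⁻¹ := by
      field_simp
    rw [hnum, hden, mul_div_mul_right _ _ h4]
  -- limits of A = αt/p and B = βt/p
  have hAsq : ∀ p : ℝ, p ≠ 0 → (αt p / (p : ℂ)) ^ 2
      = (a : ℂ) ^ 2 + 2 * I * ((V / cl : ℝ) : ℂ) * ((p : ℂ))⁻¹ + (((p : ℂ))⁻¹) ^ 2 := by
    intro p hp
    have hpc : (p : ℂ) ≠ 0 := Complex.ofReal_ne_zero.mpr hp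
    have h : ((p : ℂ))⁻¹ * (p : ℂ) = 1 := inv_mul_cancel₀ hpc
    rw [div_pow, (hαt p).2, div_eq_iff (pow_ne_zero 2 hpc)]
    symm
    calc ((a : ℂ) ^ 2 + 2 * I * ((V / cl : ℝ) : ℂ) * ((p : ℂ))⁻¹ + (((p : ℂ))⁻¹) ^ 2) * (p : ℂ) ^ 2
        = (a : ℂ) ^ 2 * (p : ℂ) ^ 2
          + 2 * I * ((V / cl : ℝ) : ℂ) * (((p : ℂ))⁻¹ * (p : ℂ)) * (p : ℂ)
          + (((p : ℂ))⁻¹ * (p : ℂ)) ^ 2 := by ring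
      _ = (a : ℂ) ^ 2 * (p : ℂ) ^ 2 + 2 * I * ((V / cl : ℝ) : ℂ) * (p : ℂ) + 1 := by
          rw [h]; ring
  have hBsq : ∀ p : ℝ, p ≠ 0 → (βt p / (p : ℂ)) ^ 2
      = (b : ℂ) ^ 2 + 2 * I * ((V * cl / cs ^ 2 : ℝ) : ℂ) * ((p : ℂ))⁻¹
        + ((cl ^ 2 / cs ^ 2 : ℝ) : ℂ) * (((p : ℂ))⁻¹) ^ 2 := by
    intro p hp
    have hpc : (p : ℂ) ≠ 0 := Complex.ofReal_ne_zero.mpr hp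
    have h : ((p : ℂ))⁻¹ * (p : ℂ) = 1 := inv_mul_cancel₀ hpc
    rw [div_pow, (hβt p).2, div_eq_iff (pow_ne_zero 2 hpc)]
    symm
    calc ((b : ℂ) ^ 2 + 2 * I * ((V * cl / cs ^ 2 : ℝ) : ℂ) * ((p : ℂ))⁻¹
          + ((cl ^ 2 / cs ^ 2 : ℝ) : ℂ) * (((p : ℂ))⁻¹) ^ 2) * (p : ℂ) ^ 2
        = (b : ℂ) ^ 2 * (p : ℂ) ^ 2
          + 2 * I * ((V * cl / cs ^ 2 : ℝ) : ℂ) * (((p : ℂ))⁻¹ * (p : ℂ)) * (p : ℂ)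
          + ((cl ^ 2 / cs ^ 2 : ℝ) : ℂ) * (((p : ℂ))⁻¹ * (p : ℂ)) ^ 2 := by ring
      _ = (b : ℂ) ^ 2 * (p : ℂ) ^ 2 + 2 * I * ((V * cl / cs ^ 2 : ℝ) : ℂ) * (p : ℂ)
          + ((cl ^ 2 / cs ^ 2 : ℝ) : ℂ) := by rw [h]; ring
  have hreA : ∀ p : ℝ, 0 < p → 0 < (αt p / (p : ℂ)).re := by
    intro p hp
    have : (αt p / (p : ℂ)).re = (αt p).re * p⁻¹ := by
      rw [div_eq_mul_inv, ← Complex.ofReal_inv, Complex.mul_re]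
      simp
    rw [this]
    exact mul_pos (hαt p).1 (inv_pos.mpr hp)
  have hreB : ∀ p : ℝ, 0 < p → 0 < (βt p / (p : ℂ)).re := by
    intro p hp
    have : (βt p / (p : ℂ)).re = (βt p).re * p⁻¹ := by
      rw [div_eq_mul_inv, ← Complex.ofReal_inv, Complex.mul_re]
      simp
    rw [this]
    exact mul_pos (hβt p).1 (inv_pos.mpr hp)
  have hreA' : ∀ p : ℝ, p < 0 → 0 < (-(αt p / (p : ℂ))).re := by
    intro p hp
    have h : (αt p / (p : ℂ)).re = (αt p).re * p⁻¹ := by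
      rw [div_eq_mul_inv, ← Complex.ofReal_inv, Complex.mul_re]
      simp
    rw [Complex.neg_re, h]
    nlinarith [(hαt p).1, inv_lt_zero.mpr hp]
  have hreB' : ∀ p : ℝ, p < 0 → 0 < (-(βt p / (p : ℂ))).re := by
    intro p hp
    have h : (βt p / (p : ℂ)).re = (βt p).re * p⁻¹ := by
      rw [div_eq_mul_inv, ← Complex.ofReal_inv, Complex.mul_re]
      simp
    rw [Complex.neg_re, h]
    nlinarith [(hβt p).1, inv_lt_zero.mpr hp]
  -- complex inverse limits
  have hinvT : Tendsto (fun p : ℝ => ((p : ℂ))⁻¹) atTop (nhds 0) := by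
    have h := (Complex.continuous_ofReal.tendsto 0).comp tendsto_inv_atTop_zero
    rw [Complex.ofReal_zero] at h
    exact h.congr fun p => Complex.ofReal_inv p
  have hinvB : Tendsto (fun p : ℝ => ((p : ℂ))⁻¹) atBot (nhds 0) := by
    have h := (Complex.continuous_ofReal.tendsto 0).comp aux_inv_atBot
    rw [Complex.ofReal_zero] at h
    exact h.congr fun p => Complex.ofReal_inv p
  -- squared limits
  have hAsqT : Tendsto (fun p : ℝ => (αt p / (p : ℂ)) ^ 2) atTop (nhds ((a : ℂ) ^ 2)) := by
    have h1 : Tendsto (fun p : ℝ => (a : ℂ) ^ 2 + 2 * I * ((V / cl : ℝ) : ℂ) * ((p : ℂ))⁻¹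
        + (((p : ℂ))⁻¹) ^ 2) atTop (nhds ((a : ℂ) ^ 2 + 2 * I * ((V / cl : ℝ) : ℂ) * 0 + 0 ^ 2)) :=
      (tendsto_const_nhds.add (tendsto_const_nhds.mul hinvT)).add (hinvT.pow 2)
    simp only [mul_zero, add_zero, zero_pow, ne_eq, OfNat.ofNat_ne_zero, not_false_eq_true] at h1
    exact h1.congr' (by filter_upwards [eventually_ne_atTop (0:ℝ)] with p hp using (hAsq p hp).symm)
  have hAsqB : Tendsto (fun p : ℝ => (αt p / (p : ℂ)) ^ 2) atBot (nhds ((a : ℂ) ^ 2)) := by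
    have h1 : Tendsto (fun p : ℝ => (a : ℂ) ^ 2 + 2 * I * ((V / cl : ℝ) : ℂ) * ((p : ℂ))⁻¹
        + (((p : ℂ))⁻¹) ^ 2) atBot (nhds ((a : ℂ) ^ 2 + 2 * I * ((V / cl : ℝ) : ℂ) * 0 + 0 ^ 2)) :=
      (tendsto_const_nhds.add (tendsto_const_nhds.mul hinvB)).add (hinvB.pow 2)
    simp only [mul_zero, add_zero, zero_pow, ne_eq, OfNat.ofNat_ne_zero, not_false_eq_true] at h1
    exact h1.congr' (by filter_upwards [eventually_ne_atBot (0:ℝ)] with p hp using (hAsq p hp).symm)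
  have hBsqT : Tendsto (fun p : ℝ => (βt p / (p : ℂ)) ^ 2) atTop (nhds ((b : ℂ) ^ 2)) := by
    have h1 : Tendsto (fun p : ℝ => (b : ℂ) ^ 2 + 2 * I * ((V * cl / cs ^ 2 : ℝ) : ℂ) * ((p : ℂ))⁻¹
        + ((cl ^ 2 / cs ^ 2 : ℝ) : ℂ) * (((p : ℂ))⁻¹) ^ 2) atTop
        (nhds ((b : ℂ) ^ 2 + 2 * I * ((V * cl / cs ^ 2 : ℝ) : ℂ) * 0
          + ((cl ^ 2 / cs ^ 2 : ℝ) : ℂ) * 0 ^ 2)) :=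
      (tendsto_const_nhds.add (tendsto_const_nhds.mul hinvT)).add
        (tendsto_const_nhds.mul (hinvT.pow 2))
    simp only [mul_zero, add_zero, zero_pow, ne_eq, OfNat.ofNat_ne_zero, not_false_eq_true] at h1
    exact h1.congr' (by filter_upwards [eventually_ne_atTop (0:ℝ)] with p hp using (hBsq p hp).symm)
  have hBsqB : Tendsto (fun p : ℝ => (βt p / (p : ℂ)) ^ 2) atBot (nhds ((b : ℂ) ^ 2)) := by
    have h1 : Tendsto (fun p : ℝ => (b : ℂ) ^ 2 + 2 * I * ((V * cl / cs ^ 2 : ℝ) : ℂ) * ((p : ℂ))⁻¹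
        + ((cl ^ 2 / cs ^ 2 : ℝ) : ℂ) * (((p : ℂ))⁻¹) ^ 2) atBot
        (nhds ((b : ℂ) ^ 2 + 2 * I * ((V * cl / cs ^ 2 : ℝ) : ℂ) * 0
          + ((cl ^ 2 / cs ^ 2 : ℝ) : ℂ) * 0 ^ 2)) :=
      (tendsto_const_nhds.add (tendsto_const_nhds.mul hinvB)).add
        (tendsto_const_nhds.mul (hinvB.pow 2))
    simp only [mul_zero, add_zero, zero_pow, ne_eq, OfNat.ofNat_ne_zero, not_false_eq_true] at h1
    exact h1.congr' (by filter_upwards [eventually_ne_atBot (0:ℝ)] with p hp using (hBsq p hp).symm)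
  -- A, B limits
  have hAT : Tendsto (fun p : ℝ => αt p / (p : ℂ)) atTop (nhds (a : ℂ)) :=
    aux_sqrt_tendsto ha (by filter_upwards [eventually_gt_atTop (0:ℝ)] with p hp using hreA p hp)
      hAsqT
  have hBT : Tendsto (fun p : ℝ => βt p / (p : ℂ)) atTop (nhds (b : ℂ)) :=
    aux_sqrt_tendsto hb (by filter_upwards [eventually_gt_atTop (0:ℝ)] with p hp using hreB p hp)
      hBsqT
  have hAB' : Tendsto (fun p : ℝ => -(αt p / (p : ℂ))) atBot (nhds (a : ℂ)) :=
    aux_sqrt_tendsto ha (by filter_upwards [eventually_lt_atBot (0:ℝ)] with p hp using hreA' p hp)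
      (hAsqB.congr fun p => (neg_sq _).symm)
  have hBB' : Tendsto (fun p : ℝ => -(βt p / (p : ℂ))) atBot (nhds (b : ℂ)) :=
    aux_sqrt_tendsto hb (by filter_upwards [eventually_lt_atBot (0:ℝ)] with p hp using hreB' p hp)
      (hBsqB.congr fun p => (neg_sq _).symm)
  have hAB : Tendsto (fun p : ℝ => αt p / (p : ℂ)) atBot (nhds (-(a : ℂ))) :=
    hAB'.neg.congr fun p => neg_neg _
  have hBB : Tendsto (fun p : ℝ => βt p / (p : ℂ)) atBot (nhds (-(b : ℂ))) :=
    hBB'.neg.congr fun p => neg_neg _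
  -- denominators nonzero
  have hdenT : (2 * (a : ℂ) * (1 - (b : ℂ) ^ 2)) ≠ 0 := by
    have : (2 * (a : ℂ) * (1 - (b : ℂ) ^ 2)) = ((2 * a * (1 - b ^ 2) : ℝ) : ℂ) := by push_cast; ring
    rw [this]
    exact Complex.ofReal_ne_zero.mpr (by positivity)
  have hdenB : (2 * (-(a : ℂ)) * (1 - (-(b : ℂ)) ^ 2)) ≠ 0 := by
    have : (2 * (-(a : ℂ)) * (1 - (-(b : ℂ)) ^ 2)) = ((-(2 * a * (1 - b ^ 2)) : ℝ) : ℂ) := by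
      push_cast; ring
    rw [this]
    exact Complex.ofReal_ne_zero.mpr (by nlinarith)
  -- combined limits of the rewritten form
  have hmainT : Tendsto (fun p : ℝ =>
      ((1 + (βt p / (p : ℂ)) ^ 2) ^ 2 - 4 * (αt p / (p : ℂ)) * (βt p / (p : ℂ))) /
        (2 * (αt p / (p : ℂ)) * (1 - (βt p / (p : ℂ)) ^ 2))) atTop
      (nhds (((1 + (b : ℂ) ^ 2) ^ 2 - 4 * (a : ℂ) * (b : ℂ)) /
        (2 * (a : ℂ) * (1 - (b : ℂ) ^ 2)))) :=
    Tendsto.div (((tendsto_const_nhds.add (hBT.pow 2)).pow 2).sub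
        ((tendsto_const_nhds.mul hAT).mul hBT))
      ((tendsto_const_nhds.mul hAT).mul (tendsto_const_nhds.sub (hBT.pow 2))) hdenT
  have hmainB : Tendsto (fun p : ℝ =>
      ((1 + (βt p / (p : ℂ)) ^ 2) ^ 2 - 4 * (αt p / (p : ℂ)) * (βt p / (p : ℂ))) /
        (2 * (αt p / (p : ℂ)) * (1 - (βt p / (p : ℂ)) ^ 2))) atBot
      (nhds (((1 + (-(b : ℂ)) ^ 2) ^ 2 - 4 * (-(a : ℂ)) * (-(b : ℂ))) /
        (2 * (-(a : ℂ)) * (1 - (-(b : ℂ)) ^ 2)))) :=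
    Tendsto.div (((tendsto_const_nhds.add (hBB.pow 2)).pow 2).sub
        ((tendsto_const_nhds.mul hAB).mul hBB))
      ((tendsto_const_nhds.mul hAB).mul (tendsto_const_nhds.sub (hBB.pow 2))) hdenB
  -- value identifications
  have hval : ((1 + b ^ 2) ^ 2 - 4 * a * b) / (2 * a * (1 - b ^ 2))
      = -((4 * a * b - (1 + b ^ 2) ^ 2) / (2 * a * (V / cs) ^ 2)) := by
    rw [← hbt]; ring
  have hvalT : (((1 + (b : ℂ) ^ 2) ^ 2 - 4 * (a : ℂ) * (b : ℂ)) /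
      (2 * (a : ℂ) * (1 - (b : ℂ) ^ 2)))
      = -(((4 * a * b - (1 + b ^ 2) ^ 2) / (2 * a * (V / cs) ^ 2) : ℝ) : ℂ) := by
    rw [show (((1 + (b : ℂ) ^ 2) ^ 2 - 4 * (a : ℂ) * (b : ℂ)) /
        (2 * (a : ℂ) * (1 - (b : ℂ) ^ 2)))
      = ((((1 + b ^ 2) ^ 2 - 4 * a * b) / (2 * a * (1 - b ^ 2)) : ℝ) : ℂ) by push_cast; ring,
      hval]
    push_cast
    ring
  have hvalB : (((1 + (-(b : ℂ)) ^ 2) ^ 2 - 4 * (-(a : ℂ)) * (-(b : ℂ))) /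
      (2 * (-(a : ℂ)) * (1 - (-(b : ℂ)) ^ 2)))
      = (((4 * a * b - (1 + b ^ 2) ^ 2) / (2 * a * (V / cs) ^ 2) : ℝ) : ℂ) := by
    have e1 : (((1 + (-(b : ℂ)) ^ 2) ^ 2 - 4 * (-(a : ℂ)) * (-(b : ℂ))) /
        (2 * (-(a : ℂ)) * (1 - (-(b : ℂ)) ^ 2)))
        = -(((1 + (b : ℂ) ^ 2) ^ 2 - 4 * (a : ℂ) * (b : ℂ)) /
            (2 * (a : ℂ) * (1 - (b : ℂ) ^ 2))) := by
      rw [show ((1 + (-(b : ℂ)) ^ 2) ^ 2 - 4 * (-(a : ℂ)) * (-(b : ℂ)))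
            = ((1 + (b : ℂ) ^ 2) ^ 2 - 4 * (a : ℂ) * (b : ℂ)) from by ring,
          show (2 * (-(a : ℂ)) * (1 - (-(b : ℂ)) ^ 2))
            = -(2 * (a : ℂ) * (1 - (b : ℂ) ^ 2)) from by ring, div_neg]
    rw [e1, hvalT, neg_neg]
  constructor
  · rw [← hvalT]
    exact hmainT.congr'
      (by filter_upwards [eventually_ne_atTop (0:ℝ)] with p hp using (hrw p hp).symm)
  · rw [← hvalB]
    exact hmainB.congr'
      (by filter_upwards [eventually_ne_atBot (0:ℝ)] with p hp using (hrw p hp).symm)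
end

section
/- Let 0 < c_s < c_l and define the Rayleigh function R₀(V) = 4√(1 − V²/c_l²)·√(1 − V²/c_s²) − (2 − V²/c_s²)² for V ∈ [0, c_s]. Then there exists a unique c_R ∈ (0, c_s) with R₀(c_R) = 0; moreover R₀(V) > 0 for all V ∈ (0, c_R) and R₀(V) < 0 for all V ∈ (c_R, c_s). -/
noncomputable def Q (k x : ℝ) : ℝ := 16*(1-k) + (16*k-24)*x + 8*x^2 - x^3

lemma once_neg {k a b : ℝ} (hk0 : 0 < k) (hk1 : k < 1) (ha : 0 < a) (hab : a < b)
    (hb : b < 1) (hQa : Q k a ≤ 0) : Q k b < 0 := by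
  unfold Q at *
  have h1 : (0:ℝ) < 1 - a := by linarith
  have h2 : (0:ℝ) < 1 - b := by linarith
  have h3 : (0:ℝ) < b - a := by linarith
  have h4 : (0:ℝ) < 7 - a - b := by linarith
  nlinarith [mul_pos (mul_pos h3 h2) (mul_pos h1 h4), mul_nonneg h2.le (neg_nonneg.2 hQa)]

lemma sign_aux {k x : ℝ} (hk0 : 0 < k) (hk1 : k < 1) (hx0 : 0 < x) (hx1 : x < 1) :
    ∃ P : ℝ, 0 < P ∧
      (4 * Real.sqrt (1 - k*x) * Real.sqrt (1 - x) - (2 - x)^2) * P = x * Q k x := by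
  set s := Real.sqrt (1 - k*x) with hs
  set t := Real.sqrt (1 - x) with ht
  have hkx : 0 ≤ 1 - k*x := by nlinarith
  have hxx : 0 ≤ 1 - x := by linarith
  have hs2 : s^2 = 1 - k*x := Real.sq_sqrt hkx
  have ht2 : t^2 = 1 - x := Real.sq_sqrt hxx
  refine ⟨4*s*t + (2-x)^2, ?_, ?_⟩
  · have : (0:ℝ) < (2-x)^2 := pow_pos (by linarith) 2
    nlinarith [Real.sqrt_nonneg (1-k*x), Real.sqrt_nonneg (1-x)]
  · have : (4*s*t - (2-x)^2) * (4*s*t + (2-x)^2) = 16*s^2*t^2 - ((2-x)^2)^2 := by ring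
    rw [this, hs2, ht2]
    unfold Q; ring

lemma exists_root {k : ℝ} (hk0 : 0 < k) (hk1 : k < 1) :
    ∃ c : ℝ, 0 < c ∧ c < 1 ∧ Q k c = 0 := by
  have hc : ContinuousOn (Q k) (Set.Icc 0 1) := by
    apply Continuous.continuousOn; unfold Q; continuity
  have h01 : Q k 1 ≤ 0 ∧ 0 ≤ Q k 0 := by constructor <;> (unfold Q; nlinarith)
  have := intermediate_value_Icc' (by norm_num : (0:ℝ) ≤ 1) hc
  obtain ⟨c, hc01, hQc⟩ := this ⟨h01.1, h01.2⟩
  refine ⟨c, ?_, ?_, hQc⟩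
  · rcases hc01.1.lt_or_eq with h | h
    · exact h
    · exfalso; rw [← h] at hQc; unfold Q at hQc; nlinarith
  · rcases hc01.2.lt_or_eq with h | h
    · exact h
    · exfalso; rw [h] at hQc; unfold Q at hQc; nlinarith

/-- The Rayleigh function `R₀(V) = 4√(1 − V²/c_l²)√(1 − V²/c_s²) − (2 − V²/c_s²)²` has a
unique zero `c_R ∈ (0, c_s)`; it is positive on `(0, c_R)` and negative on `(c_R, c_s)`. -/
theorem stmt_11 (cl cs : ℝ) (hcs : 0 < cs) (hcl : cs < cl) :
    ∃ cR : ℝ, 0 < cR ∧ cR < cs ∧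
      (4 * Real.sqrt (1 - cR ^ 2 / cl ^ 2) * Real.sqrt (1 - cR ^ 2 / cs ^ 2)
        - (2 - cR ^ 2 / cs ^ 2) ^ 2 = 0) ∧
      (∀ V : ℝ, 0 < V → V < cR →
        0 < 4 * Real.sqrt (1 - V ^ 2 / cl ^ 2) * Real.sqrt (1 - V ^ 2 / cs ^ 2)
          - (2 - V ^ 2 / cs ^ 2) ^ 2) ∧
      (∀ V : ℝ, cR < V → V < cs →
        4 * Real.sqrt (1 - V ^ 2 / cl ^ 2) * Real.sqrt (1 - V ^ 2 / cs ^ 2)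
          - (2 - V ^ 2 / cs ^ 2) ^ 2 < 0) ∧
      (∀ V : ℝ, 0 < V → V < cs →
        4 * Real.sqrt (1 - V ^ 2 / cl ^ 2) * Real.sqrt (1 - V ^ 2 / cs ^ 2)
          - (2 - V ^ 2 / cs ^ 2) ^ 2 = 0 → V = cR) := by
  have hcl0 : 0 < cl := hcs.trans hcl
  set k := cs^2 / cl^2 with hk
  have hk0 : 0 < k := by positivity
  have hk1 : k < 1 := by
    rw [hk, div_lt_one (by positivity)]
    exact pow_lt_pow_left₀ hcl hcs.le two_ne_zero
  obtain ⟨c, hc0, hc1, hQc⟩ := exists_root hk0 hk1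
  -- sign facts about Q
  have Qpos : ∀ x : ℝ, 0 < x → x < c → 0 < Q k x := by
    intro x hx0 hxc
    by_contra h
    push_neg at h
    have := once_neg hk0 hk1 hx0 hxc hc1 h
    linarith [hQc ▸ this]
  have Qneg : ∀ x : ℝ, c < x → x < 1 → Q k x < 0 := fun x hcx hx1 =>
    once_neg hk0 hk1 hc0 hcx hx1 hQc.le
  -- translation of the expression
  have key : ∀ V : ℝ, 0 < V → V < cs →
      ∃ P : ℝ, 0 < P ∧
        (4 * Real.sqrt (1 - V ^ 2 / cl ^ 2) * Real.sqrt (1 - V ^ 2 / cs ^ 2)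
          - (2 - V ^ 2 / cs ^ 2) ^ 2) * P = (V^2/cs^2) * Q k (V^2/cs^2) := by
    intro V hV0 hVs
    have hx0 : 0 < V^2/cs^2 := by positivity
    have hx1 : V^2/cs^2 < 1 := by
      rw [div_lt_one (by positivity)]
      exact pow_lt_pow_left₀ hVs hV0.le two_ne_zero
    have e1 : (1:ℝ) - V^2/cl^2 = 1 - k * (V^2/cs^2) := by
      rw [hk]; field_simp
    rw [e1]
    exact sign_aux hk0 hk1 hx0 hx1
  refine ⟨cs * Real.sqrt c, by positivity, ?_, ?_, ?_, ?_, ?_⟩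
  · have : Real.sqrt c < 1 := by
      rw [show (1:ℝ) = Real.sqrt 1 by simp]
      exact Real.sqrt_lt_sqrt hc0.le hc1
    nlinarith [Real.sqrt_nonneg c]
  · -- value at cR
    have hx : (cs * Real.sqrt c)^2 / cs^2 = c := by
      rw [mul_pow, Real.sq_sqrt hc0.le]
      field_simp
    have hcR0 : 0 < cs * Real.sqrt c := by positivity
    have hcRs : cs * Real.sqrt c < cs := by
      have : Real.sqrt c < 1 := by
        rw [show (1:ℝ) = Real.sqrt 1 by simp]
        exact Real.sqrt_lt_sqrt hc0.le hc1
      nlinarith [Real.sqrt_nonneg c]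
    obtain ⟨P, hP, hPe⟩ := key _ hcR0 hcRs
    rw [hx, hQc, mul_zero] at hPe
    rw [hx]
    exact (mul_eq_zero.1 hPe).resolve_right hP.ne'
  · -- positive on (0, cR)
    intro V hV0 hVcR
    have hsc1 : Real.sqrt c < 1 := by
      rw [show (1:ℝ) = Real.sqrt 1 by simp]
      exact Real.sqrt_lt_sqrt hc0.le hc1
    have hVs : V < cs := by nlinarith [Real.sqrt_nonneg c]
    obtain ⟨P, hP, hPe⟩ := key V hV0 hVs
    have hxc : V^2/cs^2 < c := by
      rw [div_lt_iff₀ (by positivity), ← Real.sq_sqrt hc0.le]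
      nlinarith [Real.sqrt_nonneg c]
    have hx0 : 0 < V^2/cs^2 := by positivity
    have h := mul_pos hx0 (Qpos _ hx0 hxc)
    nlinarith
  · -- negative on (cR, cs)
    intro V hcRV hVs
    have hV0 : 0 < V := lt_trans (by positivity) hcRV
    obtain ⟨P, hP, hPe⟩ := key V hV0 hVs
    have hcx : c < V^2/cs^2 := by
      rw [lt_div_iff₀ (by positivity), ← Real.sq_sqrt hc0.le]
      nlinarith [mul_pos (show 0 < V - cs*Real.sqrt c by linarith)
        (show 0 < V + cs*Real.sqrt c by positivity)]
    have hx1 : V^2/cs^2 < 1 := by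
      rw [div_lt_one (by positivity)]
      exact pow_lt_pow_left₀ hVs hV0.le two_ne_zero
    have h := mul_neg_of_pos_of_neg (show 0 < V^2/cs^2 by positivity) (Qneg _ hcx hx1)
    nlinarith
  · -- uniqueness
    intro V hV0 hVs hf
    obtain ⟨P, hP, hPe⟩ := key V hV0 hVs
    rw [hf, zero_mul] at hPe
    have hx0 : 0 < V^2/cs^2 := by positivity
    have hx1 : V^2/cs^2 < 1 := by
      rw [div_lt_one (by positivity)]
      exact pow_lt_pow_left₀ hVs hV0.le two_ne_zero
    have hQ0 : Q k (V^2/cs^2) = 0 := by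
      rcases mul_eq_zero.1 hPe.symm with h | h
      · exact absurd h hx0.ne'
      · exact h
    have hxc : V^2/cs^2 = c := by
      rcases lt_trichotomy (V^2/cs^2) c with h | h | h
      · exact absurd hQ0 (Qpos _ hx0 h).ne'
      · exact h
      · exact absurd hQ0 (Qneg _ h hx1).ne
    have hV2 : V^2 = (cs * Real.sqrt c)^2 := by
      rw [mul_pow, Real.sq_sqrt hc0.le]
      field_simp at hxc
      linarith [hxc]
    have hfac : (V - cs * Real.sqrt c) * (V + cs * Real.sqrt c) = 0 := by
      linear_combination hV2
    rcases mul_eq_zero.1 hfac with h | h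
    · linarith
    · exfalso
      have : 0 < cs * Real.sqrt c := by positivity
      linarith
end

section
/- Let 0 < c_s < c_l, 0 < V < c_s, s > 0 and δ > 0 be real; set α̂ = √(1 − V²/c_l²), β̂ = √(1 − V²/c_s²), v_s = V/c_s, R₀ = 4α̂β̂ − (1 + β̂²)², γ₁ = R₀/(2β̂v_s²). Let α, β : ℝ → ℂ be functions such that for every real p, Re α(p) > 0, α(p)² = α̂²p² + 2ipsV/c_l² + s²/c_l², Re β(p) > 0, and β(p)² = β̂²p² + 2ipsV/c_s² + s²/c_s². Define R₁(p) = (p² + β(p)²)² − 4α(p)β(p)p², R₂(p) = (p² + β(p)²)² + 4α(p)β(p)p², Δ(p) = R₁(p)² sinh²((α(p)+β(p))δ/2) − R₂(p)² sinh²((α(p)−β(p))δ/2), and g₁₁(p) = (e^{−(α(p)+β(p))δ}/(2β(p)(p² − β(p)²)p))·[R₁(p) sinh((α(p)+β(p))δ) − R₂(p) sinh((α(p)−β(p))δ) + 2Δ(p)/R₁(p)]. Then g₁₁(p) → −γ₁ as p → +∞ (for all sufficiently large p the expression is defined). -/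
open Complex Filter

private lemma inv_tendsto_c : Tendsto (fun p : ℝ => ((p:ℂ))⁻¹) atTop (nhds 0) := by
  have h : Tendsto (fun p : ℝ => p⁻¹) atTop (nhds 0) := tendsto_inv_atTop_zero
  have h2 := (Complex.continuous_ofReal.tendsto 0).comp h
  refine Tendsto.congr ?_ (by simpa using h2)
  intro p; simp

private lemma aux_sq_lim (c d e : ℝ) (f : ℝ → ℂ)
    (hsq : ∀ p : ℝ, p ≠ 0 → (f p / p)^2 = (c:ℂ)^2 + (d:ℂ)*I*((p:ℂ))⁻¹ + (e:ℂ)*((p:ℂ))⁻¹^2) :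
    Tendsto (fun p : ℝ => (f p / p)^2) atTop (nhds ((c:ℂ)^2)) := by
  have h1 : Tendsto (fun p : ℝ => (c:ℂ)^2 + (d:ℂ)*I*((p:ℂ))⁻¹ + (e:ℂ)*((p:ℂ))⁻¹^2) atTop
      (nhds ((c:ℂ)^2 + (d:ℂ)*I*0 + (e:ℂ)*0^2)) := by
    exact (tendsto_const_nhds.add ((tendsto_const_nhds).mul inv_tendsto_c)).add
      ((tendsto_const_nhds).mul (inv_tendsto_c.pow 2))
  have h2 : Tendsto (fun p : ℝ => (c:ℂ)^2 + (d:ℂ)*I*((p:ℂ))⁻¹ + (e:ℂ)*((p:ℂ))⁻¹^2) atTop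
      (nhds ((c:ℂ)^2)) := by simpa using h1
  refine h2.congr' ?_
  filter_upwards [eventually_ne_atTop 0] with p hp
  exact (hsq p hp).symm

private lemma aux_lim (c d e : ℝ) (hc : 0 < c) (f : ℝ → ℂ)
    (hre : ∀ p, 0 < (f p).re)
    (hsq : ∀ p : ℝ, p ≠ 0 → (f p / p)^2 = (c:ℂ)^2 + (d:ℂ)*I*((p:ℂ))⁻¹ + (e:ℂ)*((p:ℂ))⁻¹^2) :
    Tendsto (fun p : ℝ => f p / (p:ℂ)) atTop (nhds (c:ℂ)) := by
  set g : ℝ → ℂ := fun p => f p / (p:ℂ) with hg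
  have hsq2 := aux_sq_lim c d e f hsq
  have hnum : Tendsto (fun p : ℝ => ‖(g p)^2 - (c:ℂ)^2‖) atTop (nhds 0) := by
    have := hsq2.sub (tendsto_const_nhds (x := (c:ℂ)^2))
    rw [sub_self] at this
    exact (tendsto_zero_iff_norm_tendsto_zero.mp this)
  rw [tendsto_iff_norm_sub_tendsto_zero]
  apply squeeze_zero' (g := fun p => ‖(g p)^2 - (c:ℂ)^2‖ / c)
  · filter_upwards with p; exact norm_nonneg _
  · filter_upwards [eventually_gt_atTop 0] with p hp
    have hgre : 0 < (g p).re + c := by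
      have : (g p).re = (f p).re / p := Complex.div_ofReal_re (f p) p
      have h1 : 0 < (f p).re / p := div_pos (hre p) hp
      rw [this]; linarith
    have hnorm : c ≤ ‖g p + (c:ℂ)‖ := by
      have h1 : (g p + (c:ℂ)).re ≤ ‖g p + (c:ℂ)‖ := Complex.re_le_norm _
      have h2 : (g p + (c:ℂ)).re = (g p).re + c := by simp
      have : (g p).re = (f p).re / p := Complex.div_ofReal_re (f p) p
      have h3 : 0 < (f p).re / p := div_pos (hre p) hp
      rw [h2, this] at h1; linarith
    rw [le_div_iff₀ hc]
    calc ‖g p - c‖ * c ≤ ‖g p - c‖ * ‖g p + (c:ℂ)‖ := by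
          apply mul_le_mul_of_nonneg_left hnorm (norm_nonneg _)
      _ = ‖(g p - c) * (g p + c)‖ := (norm_mul _ _).symm
      _ = ‖(g p)^2 - (c:ℂ)^2‖ := by ring_nf
  · simpa using hnum.div_const c

private lemma aux_im_lim (c d e : ℝ) (hc : 0 < c) (f : ℝ → ℂ)
    (hre : ∀ p, 0 < (f p).re)
    (hsq : ∀ p : ℝ, p ≠ 0 → (f p / p)^2 = (c:ℂ)^2 + (d:ℂ)*I*((p:ℂ))⁻¹ + (e:ℂ)*((p:ℂ))⁻¹^2)
    (hrel : Tendsto (fun p : ℝ => (f p / (p:ℂ)).re) atTop (nhds c)) :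
    Tendsto (fun p : ℝ => p * (f p / (p:ℂ)).im) atTop (nhds (d/(2*c))) := by
  have hlim : Tendsto (fun p : ℝ => d / (2 * (f p / (p:ℂ)).re)) atTop (nhds (d/(2*c))) := by
    exact tendsto_const_nhds.div (hrel.const_mul 2) (by positivity)
  refine hlim.congr' ?_
  filter_upwards [eventually_gt_atTop 0] with p hp
  have hp0 : p ≠ 0 := ne_of_gt hp
  have h1 := hsq p hp0
  have hcast : (f p / (p:ℂ))^2
      = ((c^2 + e * (p⁻¹)^2 : ℝ) : ℂ) + ((d * p⁻¹ : ℝ):ℂ) * I := by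
    rw [h1]; push_cast; ring
  have him : ((f p / (p:ℂ))^2).im = d * p⁻¹ := by
    rw [hcast]
    generalize (c ^ 2 + e * p⁻¹ ^ 2 : ℝ) = u
    generalize (d * p⁻¹ : ℝ) = v
    simp
  have him2 : ((f p / (p:ℂ))^2).im = 2 * (f p / (p:ℂ)).re * (f p / (p:ℂ)).im := by
    rw [sq, Complex.mul_im]; ring
  rw [him2] at him
  have hre2 : (f p / (p:ℂ)).re = (f p).re / p := Complex.div_ofReal_re (f p) p
  have hrepos : 0 < (f p / (p:ℂ)).re := by rw [hre2]; exact div_pos (hre p) hp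
  have hims : (f p / (p:ℂ)).im = (f p).im / p := Complex.div_ofReal_im (f p) p
  rw [eq_comm, eq_div_iff (by positivity), hre2, hims]
  rw [hre2, hims] at him
  field_simp at him ⊢
  first
    | linear_combination him
    | linear_combination p * him
    | linear_combination (1 - p^2) * him
    | linear_combination p^2 * him
    | (apply mul_right_cancel₀ hp0; linear_combination him)

private lemma expL1 (x y : ℂ) :
    Complex.exp (-(x+y)) * Complex.sinh (x+y) = (1 - Complex.exp (-2*x) * Complex.exp (-2*y))/2 := by
  have h1 : Complex.exp (-2*x) * Complex.exp (-2*y) = Complex.exp (-(x+y)) * Complex.exp (-(x+y)) := by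
    rw [← Complex.exp_add, ← Complex.exp_add]; congr 1; ring
  have h2 : Complex.exp (-(x+y)) * Complex.exp (x+y) = 1 := by
    rw [← Complex.exp_add, show -(x+y)+(x+y) = (0:ℂ) by ring, Complex.exp_zero]
  rw [Complex.sinh, h1]
  linear_combination h2 / 2

private lemma expL2 (x y : ℂ) :
    Complex.exp (-(x+y)) * Complex.sinh (x-y) = (Complex.exp (-2*y) - Complex.exp (-2*x))/2 := by
  have h3 : Complex.exp (-(x+y)) * Complex.exp (x-y) = Complex.exp (-2*y) := by
    rw [← Complex.exp_add]; congr 1; ring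
  have h4 : Complex.exp (-(x+y)) * Complex.exp (-(x-y)) = Complex.exp (-2*x) := by
    rw [← Complex.exp_add]; congr 1; ring
  rw [Complex.sinh]
  linear_combination (h3 - h4) / 2

private lemma expL3 (x y : ℂ) :
    Complex.exp (-(x+y)) * Complex.sinh ((x+y)/2)^2
      = (1 - 2*Complex.exp (-(x+y)) + Complex.exp (-2*x) * Complex.exp (-2*y))/4 := by
  have h1 : Complex.exp (-2*x) * Complex.exp (-2*y) = Complex.exp (-(x+y)) * Complex.exp (-(x+y)) := by
    rw [← Complex.exp_add, ← Complex.exp_add]; congr 1; ring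
  have hPQ : Complex.exp ((x+y)/2) * Complex.exp (-((x+y)/2)) = 1 := by
    rw [← Complex.exp_add, show (x+y)/2 + -((x+y)/2) = (0:ℂ) by ring, Complex.exp_zero]
  have hQQ : Complex.exp (-((x+y)/2)) * Complex.exp (-((x+y)/2)) = Complex.exp (-(x+y)) := by
    rw [← Complex.exp_add]; congr 1; ring
  have hEP : Complex.exp (-(x+y)) * (Complex.exp ((x+y)/2) * Complex.exp ((x+y)/2)) = 1 := by
    rw [← Complex.exp_add, ← Complex.exp_add, show -(x+y)+((x+y)/2+(x+y)/2) = (0:ℂ) by ring,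
      Complex.exp_zero]
  rw [Complex.sinh, h1]
  linear_combination hEP/4 + (Complex.exp (-(x+y)) * hQQ)/4
    - (Complex.exp (-(x+y)) * hPQ)/2

private lemma expL4 (x y : ℂ) :
    Complex.exp (-(x+y)) * Complex.sinh ((x-y)/2)^2
      = (Complex.exp (-2*y) - 2*Complex.exp (-(x+y)) + Complex.exp (-2*x))/4 := by
  have hPQ : Complex.exp ((x-y)/2) * Complex.exp (-((x-y)/2)) = 1 := by
    rw [← Complex.exp_add, show (x-y)/2 + -((x-y)/2) = (0:ℂ) by ring, Complex.exp_zero]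
  have hEP : Complex.exp (-(x+y)) * (Complex.exp ((x-y)/2) * Complex.exp ((x-y)/2)) = Complex.exp (-2*y) := by
    rw [← Complex.exp_add, ← Complex.exp_add]; congr 1; ring
  have hEQ : Complex.exp (-(x+y)) * (Complex.exp (-((x-y)/2)) * Complex.exp (-((x-y)/2))) = Complex.exp (-2*x) := by
    rw [← Complex.exp_add, ← Complex.exp_add]; congr 1; ring
  rw [Complex.sinh]
  linear_combination hEP/4 + hEQ/4 - (Complex.exp (-(x+y)) * hPQ)/2

private lemma no_double (x y : ℝ) (hx : 0 < x) (hy : 0 < y) (hy1 : y < 1)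
    (h1 : 4*x*y = (1+y^2)^2)
    (h2 : (1+y^2)*x*y*(1-y^2) = x^2*(1-y^2) + y^2*(1-x^2)) : False := by
  have key : (y^2-1)^2*(2*y^6+5*y^4+1) = 0 := by
    linear_combination (4*y^2*(1+y^2)*(1-y^2) - (1-2*y^2)*(4*x*y+(1+y^2)^2)) * h1 - 16*y^2 * h2
  have h2f : 0 < 2*y^6+5*y^4+1 := by positivity
  have h1f : (y^2-1)^2 = 0 := by
    rcases mul_eq_zero.mp key with h | h
    · exact h
    · nlinarith
  have h3 : y^2 - 1 = 0 := pow_eq_zero_iff (n := 2) (by norm_num) |>.mp h1f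
  nlinarith

private lemma key_id (E S1 S2 S3 S4 r1 r2 Dd E1v E2v : ℂ) (hE : E ≠ 0) (hr1 : r1 ≠ 0)
    (hD : Dd ≠ 0)
    (h1 : E*S1 = (1 - E1v*E2v)/2) (h2 : E*S2 = (E2v - E1v)/2)
    (h3 : E*S3^2 = (1 - 2*E + E1v*E2v)/4) (h4 : E*S4^2 = (E2v - 2*E + E1v)/4) :
    E / Dd * (r1*S1 - r2*S2 + 2*(r1^2*S3^2 - r2^2*S4^2)/r1)
      = (r1/Dd)*((1 - E1v*E2v)/2) - (r2/Dd)*((E2v - E1v)/2)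
        + (r1/Dd)*((1 - 2*E + E1v*E2v)/2)
        - (r2^2*(E2v - 2*E + E1v))/(2*(r1*Dd)) := by
  have h2E : (2:ℂ)*E ≠ 0 := by simp [hE]
  have h4E : (4:ℂ)*E ≠ 0 := by simp [hE]
  have hS1 : S1 = (1 - E1v*E2v)/(2*E) := by
    rw [eq_div_iff h2E]; linear_combination 2*h1
  have hS2 : S2 = (E2v - E1v)/(2*E) := by
    rw [eq_div_iff h2E]; linear_combination 2*h2
  have hS3 : S3^2 = (1 - 2*E + E1v*E2v)/(4*E) := by
    rw [eq_div_iff h4E]; linear_combination 4*h3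
  have hS4 : S4^2 = (E2v - 2*E + E1v)/(4*E) := by
    rw [eq_div_iff h4E]; linear_combination 4*h4
  rw [hS1, hS2, hS3, hS4]
  field_simp [hE, hr1, hD]
  ring

set_option maxHeartbeats 1000000

/-- Leading asymptotics (61) of the (1,1) entry (22) of the matrix coefficient `G(p,s)`:
`g₁₁(p) → −γ₁` as `p → +∞`, where `γ₁ = R₀/(2β̂v_s²)` and `R₀ = 4α̂β̂ − (1 + β̂²)²`. -/
theorem stmt_19 (cl cs V s δ : ℝ) (hcs : 0 < cs) (hcl : cs < cl) (hV0 : 0 < V)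
    (hVs : V < cs) (hs : 0 < s) (hδ : 0 < δ) (α β : ℝ → ℂ)
    (hα : ∀ p : ℝ, 0 < (α p).re ∧
      (α p) ^ 2 = ((Real.sqrt (1 - V ^ 2 / cl ^ 2) : ℝ) : ℂ) ^ 2 * (p : ℂ) ^ 2
        + 2 * I * (p : ℂ) * (s : ℂ) * (V : ℂ) / (cl : ℂ) ^ 2
        + (s : ℂ) ^ 2 / (cl : ℂ) ^ 2)
    (hβ : ∀ p : ℝ, 0 < (β p).re ∧
      (β p) ^ 2 = ((Real.sqrt (1 - V ^ 2 / cs ^ 2) : ℝ) : ℂ) ^ 2 * (p : ℂ) ^ 2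
        + 2 * I * (p : ℂ) * (s : ℂ) * (V : ℂ) / (cs : ℂ) ^ 2
        + (s : ℂ) ^ 2 / (cs : ℂ) ^ 2) :
    Tendsto (fun p : ℝ =>
        Complex.exp (-(α p + β p) * (δ : ℂ)) /
            (2 * β p * ((p : ℂ) ^ 2 - (β p) ^ 2) * (p : ℂ)) *
          ((((p : ℂ) ^ 2 + (β p) ^ 2) ^ 2 - 4 * α p * β p * (p : ℂ) ^ 2) *
              Complex.sinh ((α p + β p) * (δ : ℂ))
            - (((p : ℂ) ^ 2 + (β p) ^ 2) ^ 2 + 4 * α p * β p * (p : ℂ) ^ 2) *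
              Complex.sinh ((α p - β p) * (δ : ℂ))
            + 2 * ((((p : ℂ) ^ 2 + (β p) ^ 2) ^ 2 - 4 * α p * β p * (p : ℂ) ^ 2) ^ 2 *
                    Complex.sinh ((α p + β p) * (δ : ℂ) / 2) ^ 2
                  - (((p : ℂ) ^ 2 + (β p) ^ 2) ^ 2 + 4 * α p * β p * (p : ℂ) ^ 2) ^ 2 *
                    Complex.sinh ((α p - β p) * (δ : ℂ) / 2) ^ 2) /
                (((p : ℂ) ^ 2 + (β p) ^ 2) ^ 2 - 4 * α p * β p * (p : ℂ) ^ 2)))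
      atTop
      (nhds (-(((4 * Real.sqrt (1 - V ^ 2 / cl ^ 2) * Real.sqrt (1 - V ^ 2 / cs ^ 2)
          - (1 + Real.sqrt (1 - V ^ 2 / cs ^ 2) ^ 2) ^ 2) /
            (2 * Real.sqrt (1 - V ^ 2 / cs ^ 2) * (V / cs) ^ 2) : ℝ) : ℂ))) := by
  have hcl0 : 0 < cl := hcs.trans hcl
  have h1l : 0 < 1 - V ^ 2 / cl ^ 2 := by
    have h : V^2 < cl^2 := by nlinarith
    have := div_lt_one (a := V^2) (b := cl^2) (by positivity)
    linarith [this.mpr h]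
  have h1s : 0 < 1 - V ^ 2 / cs ^ 2 := by
    have h : V^2 < cs^2 := by nlinarith
    have := div_lt_one (a := V^2) (b := cs^2) (by positivity)
    linarith [this.mpr h]
  set ah := Real.sqrt (1 - V ^ 2 / cl ^ 2) with hahdef
  set bh := Real.sqrt (1 - V ^ 2 / cs ^ 2) with hbhdef
  have hah : 0 < ah := Real.sqrt_pos.mpr h1l
  have hbh : 0 < bh := Real.sqrt_pos.mpr h1s
  have hah2 : ah^2 = 1 - V^2/cl^2 := Real.sq_sqrt h1l.le
  have hbh2 : bh^2 = 1 - V^2/cs^2 := Real.sq_sqrt h1s.le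
  have hbh1 : bh < 1 := by
    have hq : 0 < V^2/cs^2 := by positivity
    nlinarith
  have hah1 : ah < 1 := by nlinarith [div_pos (by positivity : (0:ℝ) < V^2) (by positivity : (0:ℝ) < cl^2)]
  have hba : bh ≤ ah := by
    have h1 : V^2/cl^2 ≤ V^2/cs^2 := by
      apply div_le_div_of_nonneg_left (by positivity) (by positivity)
      nlinarith
    nlinarith
  -- square-root asymptotics for α and β
  have hsqa : ∀ p : ℝ, p ≠ 0 → (α p / (p:ℂ))^2
      = ((ah:ℝ):ℂ)^2 + ((2*s*V/cl^2 : ℝ):ℂ)*I*((p:ℂ))⁻¹ + ((s^2/cl^2 : ℝ):ℂ)*((p:ℂ))⁻¹^2 := by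
    intro p hp
    have hpc : (p:ℂ) ≠ 0 := Complex.ofReal_ne_zero.mpr hp
    have hclc : (cl:ℂ) ≠ 0 := Complex.ofReal_ne_zero.mpr (ne_of_gt hcl0)
    rw [div_pow, (hα p).2]
    field_simp
    push_cast
    field_simp
  have hsqb : ∀ p : ℝ, p ≠ 0 → (β p / (p:ℂ))^2
      = ((bh:ℝ):ℂ)^2 + ((2*s*V/cs^2 : ℝ):ℂ)*I*((p:ℂ))⁻¹ + ((s^2/cs^2 : ℝ):ℂ)*((p:ℂ))⁻¹^2 := by
    intro p hp
    have hpc : (p:ℂ) ≠ 0 := Complex.ofReal_ne_zero.mpr hp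
    have hcsc : (cs:ℂ) ≠ 0 := Complex.ofReal_ne_zero.mpr (ne_of_gt hcs)
    rw [div_pow, (hβ p).2]
    field_simp
    push_cast
    field_simp
  have hta : Tendsto (fun p : ℝ => α p / (p:ℂ)) atTop (nhds ((ah:ℝ):ℂ)) :=
    aux_lim ah (2*s*V/cl^2) (s^2/cl^2) hah α (fun p => (hα p).1) hsqa
  have htb : Tendsto (fun p : ℝ => β p / (p:ℂ)) atTop (nhds ((bh:ℝ):ℂ)) :=
    aux_lim bh (2*s*V/cs^2) (s^2/cs^2) hbh β (fun p => (hβ p).1) hsqb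
  have hra : Tendsto (fun p : ℝ => (α p / (p:ℂ)).re) atTop (nhds ah) :=
    (Complex.continuous_re.tendsto _).comp hta
  have hrb : Tendsto (fun p : ℝ => (β p / (p:ℂ)).re) atTop (nhds bh) :=
    (Complex.continuous_re.tendsto _).comp htb
  have hia : Tendsto (fun p : ℝ => p * (α p / (p:ℂ)).im) atTop (nhds ((2*s*V/cl^2)/(2*ah))) :=
    aux_im_lim ah (2*s*V/cl^2) (s^2/cl^2) hah α (fun p => (hα p).1) hsqa hra
  have hib : Tendsto (fun p : ℝ => p * (β p / (p:ℂ)).im) atTop (nhds ((2*s*V/cs^2)/(2*bh))) :=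
    aux_im_lim bh (2*s*V/cs^2) (s^2/cs^2) hbh β (fun p => (hβ p).1) hsqb hrb
  -- lower bounds on real parts
  have hrea_ev : ∀ᶠ p in atTop, ah/2 * p ≤ (α p).re := by
    filter_upwards [hra.eventually (eventually_gt_nhds (by linarith : ah/2 < ah)),
      eventually_gt_atTop 0] with p h1p hp
    have hh : (α p / (p:ℂ)).re = (α p).re / p := Complex.div_ofReal_re _ _
    rw [hh] at h1p
    have := (lt_div_iff₀ hp).mp h1p
    nlinarith
  have hreb_ev : ∀ᶠ p in atTop, bh/2 * p ≤ (β p).re := by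
    filter_upwards [hrb.eventually (eventually_gt_nhds (by linarith : bh/2 < bh)),
      eventually_gt_atTop 0] with p h1p hp
    have hh : (β p / (p:ℂ)).re = (β p).re / p := Complex.div_ofReal_re _ _
    rw [hh] at h1p
    have := (lt_div_iff₀ hp).mp h1p
    nlinarith
  -- decay of exponentials
  have hc0 : (0:ℝ) < δ*bh/2 := by positivity
  have normb : ∀ g : ℝ → ℂ, (∀ᶠ p in atTop, (g p).re ≤ -(δ*bh/2) * p) →
      ∀ᶠ p in atTop, ‖Complex.exp (g p)‖ ≤ Real.exp (-(δ*bh/2)*p) := by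
    intro g hev
    filter_upwards [hev] with p hp
    rw [Complex.norm_exp]
    exact Real.exp_le_exp.mpr hp
  have hexp0 : Tendsto (fun p : ℝ => Real.exp (-(δ*bh/2)*p)) atTop (nhds 0) := by
    apply Real.tendsto_exp_atBot.comp
    exact Tendsto.const_mul_atTop_of_neg (by nlinarith) tendsto_id
  have decay : ∀ g : ℝ → ℂ, (∀ᶠ p in atTop, (g p).re ≤ -(δ*bh/2) * p) →
      Tendsto (fun p => Complex.exp (g p)) atTop (nhds 0) := by
    intro g hev
    rw [tendsto_zero_iff_norm_tendsto_zero]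
    exact squeeze_zero' (.of_forall fun p => norm_nonneg _) (normb g hev) hexp0
  have hE1re : ∀ p : ℝ, ((-2)*(α p*(δ:ℂ))).re = -2*((α p).re*δ) := by
    intro p; simp [Complex.mul_re]
  have hE2re : ∀ p : ℝ, ((-2)*(β p*(δ:ℂ))).re = -2*((β p).re*δ) := by
    intro p; simp [Complex.mul_re]
  have hEwre : ∀ p : ℝ, (-(α p*(δ:ℂ) + β p*(δ:ℂ))).re = -((α p).re*δ + (β p).re*δ) := by
    intro p; simp [Complex.mul_re]
  have hE1ev : ∀ᶠ p in atTop, ((-2)*(α p*(δ:ℂ))).re ≤ -(δ*bh/2) * p := by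
    filter_upwards [hrea_ev, eventually_ge_atTop 0] with p h1 h2
    have f1 : δ*(ah/2*p) ≤ δ*(α p).re := mul_le_mul_of_nonneg_left h1 hδ.le
    have f2 : δ*bh*p ≤ δ*ah*p := by
      apply mul_le_mul_of_nonneg_right _ h2; nlinarith
    have f3 : 0 ≤ δ*bh*p := by positivity
    rw [hE1re p]; linarith
  have hE2ev : ∀ᶠ p in atTop, ((-2)*(β p*(δ:ℂ))).re ≤ -(δ*bh/2) * p := by
    filter_upwards [hreb_ev, eventually_ge_atTop 0] with p h1 h2
    have f1 : δ*(bh/2*p) ≤ δ*(β p).re := mul_le_mul_of_nonneg_left h1 hδ.le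
    have f3 : 0 ≤ δ*bh*p := by positivity
    rw [hE2re p]; linarith
  have hEwev : ∀ᶠ p in atTop, (-(α p*(δ:ℂ) + β p*(δ:ℂ))).re ≤ -(δ*bh/2) * p := by
    filter_upwards [hrea_ev, hreb_ev, eventually_ge_atTop 0] with p h1 h2 h3
    have f1 : δ*(ah/2*p) ≤ δ*(α p).re := mul_le_mul_of_nonneg_left h1 hδ.le
    have f2 : δ*(bh/2*p) ≤ δ*(β p).re := mul_le_mul_of_nonneg_left h2 hδ.le
    have f4 : 0 ≤ δ*(ah/2*p) := by positivity
    rw [hEwre p]; linarith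
  have hE1to0 : Tendsto (fun p : ℝ => Complex.exp ((-2)*(α p*(δ:ℂ)))) atTop (nhds 0) :=
    decay _ hE1ev
  have hE2to0 : Tendsto (fun p : ℝ => Complex.exp ((-2)*(β p*(δ:ℂ)))) atTop (nhds 0) :=
    decay _ hE2ev
  have hEwto0 : Tendsto (fun p : ℝ => Complex.exp (-(α p*(δ:ℂ) + β p*(δ:ℂ)))) atTop (nhds 0) :=
    decay _ hEwev
  -- limits of the normalized polynomial factors
  set r1L : ℂ := (1+((bh:ℝ):ℂ)^2)^2 - 4*((ah:ℝ):ℂ)*((bh:ℝ):ℂ) with hr1Ldef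
  set r2L : ℂ := (1+((bh:ℝ):ℂ)^2)^2 + 4*((ah:ℝ):ℂ)*((bh:ℝ):ℂ) with hr2Ldef
  set dL : ℂ := 2*((bh:ℝ):ℂ)*(1-((bh:ℝ):ℂ)^2) with hdLdef
  have hm1 : Tendsto (fun p : ℝ => (1+(β p/(p:ℂ))^2)^2 - 4*(α p/(p:ℂ))*(β p/(p:ℂ))) atTop
      (nhds r1L) :=
    (((tendsto_const_nhds).add (htb.pow 2)).pow 2).sub
      (((tendsto_const_nhds (x := (4:ℂ))).mul hta).mul htb)
  have hm2 : Tendsto (fun p : ℝ => (1+(β p/(p:ℂ))^2)^2 + 4*(α p/(p:ℂ))*(β p/(p:ℂ))) atTop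
      (nhds r2L) :=
    (((tendsto_const_nhds).add (htb.pow 2)).pow 2).add
      (((tendsto_const_nhds (x := (4:ℂ))).mul hta).mul htb)
  have hmD : Tendsto (fun p : ℝ => 2*(β p/(p:ℂ))*(1-(β p/(p:ℂ))^2)) atTop (nhds dL) :=
    ((tendsto_const_nhds (x := (2:ℂ))).mul htb).mul ((tendsto_const_nhds).sub (htb.pow 2))
  have hr1div : Tendsto (fun p : ℝ =>
      ((((p:ℂ)^2+(β p)^2)^2 - 4*α p*β p*(p:ℂ)^2)) / (p:ℂ)^4) atTop (nhds r1L) := by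
    refine hm1.congr' ?_
    filter_upwards [eventually_ne_atTop 0] with p hp
    have hpc : (p:ℂ) ≠ 0 := Complex.ofReal_ne_zero.mpr hp
    field_simp
  have hr2div : Tendsto (fun p : ℝ =>
      ((((p:ℂ)^2+(β p)^2)^2 + 4*α p*β p*(p:ℂ)^2)) / (p:ℂ)^4) atTop (nhds r2L) := by
    refine hm2.congr' ?_
    filter_upwards [eventually_ne_atTop 0] with p hp
    have hpc : (p:ℂ) ≠ 0 := Complex.ofReal_ne_zero.mpr hp
    field_simp
  have hDdiv : Tendsto (fun p : ℝ =>
      (2*β p*((p:ℂ)^2-(β p)^2)*(p:ℂ)) / (p:ℂ)^4) atTop (nhds dL) := by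
    refine hmD.congr' ?_
    filter_upwards [eventually_ne_atTop 0] with p hp
    have hpc : (p:ℂ) ≠ 0 := Complex.ofReal_ne_zero.mpr hp
    field_simp
  have hdLne : dL ≠ 0 := by
    have h : dL = ((2*bh*(1-bh^2) : ℝ):ℂ) := by rw [hdLdef]; push_cast; ring
    rw [h]
    exact Complex.ofReal_ne_zero.mpr (by nlinarith)
  have hdivdiv : ∀ (x y : ℂ) (p : ℝ), p ≠ 0 → x / y = (x/(p:ℂ)^4)/(y/(p:ℂ)^4) := by
    intro x y p hp
    have hpc : (p:ℂ) ≠ 0 := Complex.ofReal_ne_zero.mpr hp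
    rcases eq_or_ne y 0 with rfl | hy
    · simp
    · field_simp
  have hr1overD : Tendsto (fun p : ℝ =>
      ((((p:ℂ)^2+(β p)^2)^2 - 4*α p*β p*(p:ℂ)^2)) / (2*β p*((p:ℂ)^2-(β p)^2)*(p:ℂ)))
      atTop (nhds (r1L/dL)) := by
    refine (hr1div.div hDdiv hdLne).congr' ?_
    filter_upwards [eventually_ne_atTop 0] with p hp
    exact (hdivdiv _ _ p hp).symm
  have hr2overD : Tendsto (fun p : ℝ =>
      ((((p:ℂ)^2+(β p)^2)^2 + 4*α p*β p*(p:ℂ)^2)) / (2*β p*((p:ℂ)^2-(β p)^2)*(p:ℂ)))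
      atTop (nhds (r2L/dL)) := by
    refine (hr2div.div hDdiv hdLne).congr' ?_
    filter_upwards [eventually_ne_atTop 0] with p hp
    exact (hdivdiv _ _ p hp).symm
  have hnormp4 : ∀ p : ℝ, 0 < p → ‖((p:ℂ))^4‖ = p^4 := by
    intro p hp
    rw [norm_pow, Complex.norm_real, Real.norm_of_nonneg hp.le]
  have hDlow : ∀ᶠ p : ℝ in atTop, ‖dL‖/2 * p^4 ≤ ‖2*β p*((p:ℂ)^2-(β p)^2)*(p:ℂ)‖ := by
    filter_upwards [hDdiv.norm.eventually
      (eventually_gt_nhds (half_lt_self (norm_pos_iff.mpr hdLne))),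
      eventually_gt_atTop 0] with p h1 hp
    rw [norm_div, hnormp4 p hp] at h1
    have h2 := (lt_div_iff₀ (by positivity : (0:ℝ) < p^4)).mp h1
    linarith
  have hr2up : ∀ᶠ p : ℝ in atTop,
      ‖(((p:ℂ)^2+(β p)^2)^2 + 4*α p*β p*(p:ℂ)^2)‖ ≤ (‖r2L‖+1) * p^4 := by
    filter_upwards [hr2div.norm.eventually
      (eventually_lt_nhds (by linarith [norm_nonneg r2L] : ‖r2L‖ < ‖r2L‖+1)),
      eventually_gt_atTop 0] with p h1 hp
    rw [norm_div, hnormp4 p hp] at h1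
    have h2 := (div_lt_iff₀ (by positivity : (0:ℝ) < p^4)).mp h1
    linarith
  -- lower bound for r1
  have hr1lowex : ∃ ε1 : ℝ, 0 < ε1 ∧ ∀ᶠ p : ℝ in atTop,
      ε1 * p^3 ≤ ‖((p:ℂ)^2+(β p)^2)^2 - 4*α p*β p*(p:ℂ)^2‖ := by
    rcases eq_or_ne r1L 0 with hzero | hnz
    · -- Rayleigh-degenerate case: use the imaginary part
      set κ0 : ℝ := 2*(1+bh^2)*(2*bh*(2*s*V/cs^2/(2*bh)))
          - 4*(ah*(2*s*V/cs^2/(2*bh)) + 2*s*V/cl^2/(2*ah)*bh) with hκdef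
      have hb2re : Tendsto (fun p : ℝ => ((β p/(p:ℂ))^2).re) atTop (nhds (bh^2)) := by
        have h := (Complex.continuous_re.tendsto _).comp (htb.pow 2)
        have h2 : (((bh:ℝ):ℂ)^2).re = bh^2 := by
          rw [← Complex.ofReal_pow, Complex.ofReal_re]
        rw [h2] at h
        exact h
      have hmain : Tendsto (fun p : ℝ =>
          2*(1+((β p/(p:ℂ))^2).re)*(2*(β p/(p:ℂ)).re*(p*(β p/(p:ℂ)).im))
            - 4*((α p/(p:ℂ)).re*(p*(β p/(p:ℂ)).im) + (p*(α p/(p:ℂ)).im)*(β p/(p:ℂ)).re))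
          atTop (nhds κ0) := by
        exact (((tendsto_const_nhds (x:=(2:ℝ))).mul
            ((tendsto_const_nhds (x:=(1:ℝ))).add hb2re)).mul
              (((tendsto_const_nhds (x:=(2:ℝ))).mul hrb).mul hib)).sub
          ((tendsto_const_nhds (x:=(4:ℝ))).mul ((hra.mul hib).add (hia.mul hrb)))
      have hκlim : Tendsto (fun p : ℝ =>
          p * ((1+(β p/(p:ℂ))^2)^2 - 4*(α p/(p:ℂ))*(β p/(p:ℂ))).im) atTop (nhds κ0) := by
        refine hmain.congr ?_
        intro p
        have hexp : ((1+(β p/(p:ℂ))^2)^2 - 4*(α p/(p:ℂ))*(β p/(p:ℂ))).im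
            = 2*(1+((β p/(p:ℂ))^2).re)*((β p/(p:ℂ))^2).im
              - 4*((α p/(p:ℂ)).re*(β p/(p:ℂ)).im + (α p/(p:ℂ)).im*(β p/(p:ℂ)).re) := by
          simp [pow_two, Complex.mul_im, Complex.mul_re, Complex.add_im, Complex.add_re,
            Complex.sub_im, Complex.one_re, Complex.one_im]
          ring
        have hexp2 : ((β p/(p:ℂ))^2).im = 2*(β p/(p:ℂ)).re*(β p/(p:ℂ)).im := by
          rw [sq, Complex.mul_im]; ring
        rw [hexp, hexp2]; ring
      have hκne : κ0 ≠ 0 := by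
        intro h0
        have h1r : 4*ah*bh = (1+bh^2)^2 := by
          have hh : ((4*ah*bh - (1+bh^2)^2 : ℝ) : ℂ) = -r1L := by
            rw [hr1Ldef]; push_cast; ring
          have h2 : ((4*ah*bh - (1+bh^2)^2 : ℝ) : ℂ) = 0 := by rw [hh, hzero, neg_zero]
          have := Complex.ofReal_eq_zero.mp h2; linarith
        have hV2l : V^2 = cl^2*(1-ah^2) := by
          have h := hah2
          field_simp at h
          linarith
        have hV2s : V^2 = cs^2*(1-bh^2) := by
          have h := hbh2
          field_simp at h
          linarith
        have h2r : (1+bh^2)*ah*bh*(1-bh^2) = ah^2*(1-bh^2) + bh^2*(1-ah^2) := by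
          rw [hκdef] at h0
          field_simp at h0
          have hfac : (32*s*V*cs^2*bh : ℝ) ≠ 0 := by positivity
          have h0' : cl^2*ah*bh*(1+bh^2) = cl^2*ah^2 + cs^2*bh^2 := by
            apply mul_left_cancel₀ hfac
            linear_combination (8*cs^2*bh) * h0
          have hcl2 : (cl^2 : ℝ) ≠ 0 := by positivity
          apply mul_left_cancel₀ hcl2
          linear_combination (1-bh^2)*h0' + bh^2*hV2l - bh^2*hV2s
        exact no_double ah bh hah hbh hbh1 h1r h2r
      refine ⟨|κ0|/2, by positivity, ?_⟩
      filter_upwards [hκlim.abs.eventually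
        (eventually_gt_nhds (half_lt_self (abs_pos.mpr hκne))),
        eventually_ge_atTop 1] with p h1 hp1
      have hp : (0:ℝ) < p := lt_of_lt_of_le one_pos hp1
      have hpc : (p:ℂ) ≠ 0 := Complex.ofReal_ne_zero.mpr (ne_of_gt hp)
      have hid : ((p:ℂ)^2+(β p)^2)^2 - 4*α p*β p*(p:ℂ)^2
          = ((p^4:ℝ):ℂ) * ((1+(β p/(p:ℂ))^2)^2 - 4*(α p/(p:ℂ))*(β p/(p:ℂ))) := by
        push_cast
        field_simp
      have him : (((p:ℂ)^2+(β p)^2)^2 - 4*α p*β p*(p:ℂ)^2).im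
          = p^4 * ((1+(β p/(p:ℂ))^2)^2 - 4*(α p/(p:ℂ))*(β p/(p:ℂ))).im := by
        rw [hid, Complex.mul_im, Complex.ofReal_re, Complex.ofReal_im]
        ring
      calc |κ0|/2 * p^3
          ≤ |p * ((1+(β p/(p:ℂ))^2)^2 - 4*(α p/(p:ℂ))*(β p/(p:ℂ))).im| * p^3 := by
            exact mul_le_mul_of_nonneg_right h1.le (pow_nonneg hp.le 3)
        _ = |(((p:ℂ)^2+(β p)^2)^2 - 4*α p*β p*(p:ℂ)^2).im| := by
            rw [him, abs_mul, abs_mul, abs_of_pos hp, abs_of_pos (by positivity : (0:ℝ) < p^4)]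
            ring
        _ ≤ ‖((p:ℂ)^2+(β p)^2)^2 - 4*α p*β p*(p:ℂ)^2‖ := by
            exact Complex.abs_im_le_norm _
    · -- nondegenerate case: use the norm of the limit
      refine ⟨‖r1L‖/2, half_pos (norm_pos_iff.mpr hnz), ?_⟩
      filter_upwards [hr1div.norm.eventually
        (eventually_gt_nhds (half_lt_self (norm_pos_iff.mpr hnz))),
        eventually_ge_atTop 1] with p h1 hp1
      have hp : (0:ℝ) < p := lt_of_lt_of_le one_pos hp1
      rw [norm_div, hnormp4 p hp] at h1
      have h2 := (lt_div_iff₀ (by positivity : (0:ℝ) < p^4)).mp h1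
      have h3 : p^3 ≤ p^4 := pow_le_pow_right₀ hp1 (by norm_num)
      nlinarith [half_pos (norm_pos_iff.mpr hnz)]
  obtain ⟨ε1, hε1, hr1low⟩ := hr1lowex
  have hr1ne : ∀ᶠ p : ℝ in atTop, (((p:ℂ)^2+(β p)^2)^2 - 4*α p*β p*(p:ℂ)^2) ≠ 0 := by
    filter_upwards [hr1low, eventually_ge_atTop 1] with p h1 hp1
    intro h
    rw [h, norm_zero] at h1
    nlinarith [pow_pos (lt_of_lt_of_le one_pos hp1) 3]
  have hDne : ∀ᶠ p : ℝ in atTop, (2*β p*((p:ℂ)^2-(β p)^2)*(p:ℂ)) ≠ 0 := by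
    filter_upwards [hDlow, eventually_ge_atTop 1] with p h1 hp1
    intro h
    rw [h, norm_zero] at h1
    nlinarith [pow_pos (lt_of_lt_of_le one_pos hp1) 4, half_pos (norm_pos_iff.mpr hdLne)]
  -- the fourth (error) term tends to zero
  have hpe : Tendsto (fun p : ℝ => p * Real.exp (-(δ*bh/2)*p)) atTop (nhds 0) := by
    have h1 := (Real.tendsto_pow_mul_exp_neg_atTop_nhds_zero 1).comp
      (Tendsto.const_mul_atTop hc0 tendsto_id)
    have h2 := h1.const_mul (1/(δ*bh/2))
    rw [mul_zero] at h2
    refine Tendsto.congr ?_ h2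
    intro p
    simp only [Function.comp, pow_one, id]
    rw [show -(δ*bh/2*p) = -(δ*bh/2)*p by ring]
    field_simp
  have hT4 : Tendsto (fun p : ℝ =>
      ((((p:ℂ)^2+(β p)^2)^2 + 4*α p*β p*(p:ℂ)^2)^2
          * (Complex.exp ((-2)*(β p*(δ:ℂ))) - 2*Complex.exp (-(α p*(δ:ℂ) + β p*(δ:ℂ)))
            + Complex.exp ((-2)*(α p*(δ:ℂ)))))
        / (2*((((p:ℂ)^2+(β p)^2)^2 - 4*α p*β p*(p:ℂ)^2) * (2*β p*((p:ℂ)^2-(β p)^2)*(p:ℂ)))))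
      atTop (nhds 0) := by
    rw [tendsto_zero_iff_norm_tendsto_zero]
    have hub : Tendsto (fun p : ℝ =>
        (4*(‖r2L‖+1)^2/(2*ε1*(‖dL‖/2))) * (p * Real.exp (-(δ*bh/2)*p))) atTop (nhds 0) := by
      have := hpe.const_mul (4*(‖r2L‖+1)^2/(2*ε1*(‖dL‖/2)))
      simpa using this
    apply squeeze_zero' (.of_forall fun p => norm_nonneg _) ?_ hub
    filter_upwards [hr1low, hDlow, hr2up, normb _ hE1ev, normb _ hE2ev, normb _ hEwev,
      eventually_ge_atTop 1] with p h1 h2 h3 h4 h5 h6 hp1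
    have hp : (0:ℝ) < p := lt_of_lt_of_le one_pos hp1
    have hEsum : ‖Complex.exp ((-2)*(β p*(δ:ℂ))) - 2*Complex.exp (-(α p*(δ:ℂ) + β p*(δ:ℂ)))
        + Complex.exp ((-2)*(α p*(δ:ℂ)))‖ ≤ 4*Real.exp (-(δ*bh/2)*p) := by
      have t1 := norm_add_le (Complex.exp ((-2)*(β p*(δ:ℂ)))
        - 2*Complex.exp (-(α p*(δ:ℂ) + β p*(δ:ℂ)))) (Complex.exp ((-2)*(α p*(δ:ℂ))))
      have t2 := norm_sub_le (Complex.exp ((-2)*(β p*(δ:ℂ))))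
        (2*Complex.exp (-(α p*(δ:ℂ) + β p*(δ:ℂ))))
      have t3 : ‖(2:ℂ)*Complex.exp (-(α p*(δ:ℂ) + β p*(δ:ℂ)))‖
          = 2*‖Complex.exp (-(α p*(δ:ℂ) + β p*(δ:ℂ)))‖ := by
        rw [norm_mul]; norm_num
      rw [t3] at t2
      linarith
    have hnum : ‖(((p:ℂ)^2+(β p)^2)^2 + 4*α p*β p*(p:ℂ)^2)^2
        * (Complex.exp ((-2)*(β p*(δ:ℂ))) - 2*Complex.exp (-(α p*(δ:ℂ) + β p*(δ:ℂ)))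
          + Complex.exp ((-2)*(α p*(δ:ℂ))))‖
        ≤ ((‖r2L‖+1)*p^4)^2 * (4*Real.exp (-(δ*bh/2)*p)) := by
      rw [norm_mul, norm_pow]
      apply mul_le_mul (pow_le_pow_left₀ (norm_nonneg _) h3 2) hEsum (norm_nonneg _)
        (by positivity)
    have hden : 2*((ε1*p^3)*(‖dL‖/2*p^4))
        ≤ ‖(2:ℂ)*((((p:ℂ)^2+(β p)^2)^2 - 4*α p*β p*(p:ℂ)^2) * (2*β p*((p:ℂ)^2-(β p)^2)*(p:ℂ)))‖ := by
      have e1 : ‖(2:ℂ)*(((((p:ℂ)^2+(β p)^2)^2 - 4*α p*β p*(p:ℂ)^2)) * (2*β p*((p:ℂ)^2-(β p)^2)*(p:ℂ)))‖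
          = ‖(2:ℂ)‖ * ‖(((((p:ℂ)^2+(β p)^2)^2 - 4*α p*β p*(p:ℂ)^2)) * (2*β p*((p:ℂ)^2-(β p)^2)*(p:ℂ)))‖ :=
        norm_mul _ _
      have e2 : ‖(((((p:ℂ)^2+(β p)^2)^2 - 4*α p*β p*(p:ℂ)^2)) * (2*β p*((p:ℂ)^2-(β p)^2)*(p:ℂ)))‖
          = ‖((((p:ℂ)^2+(β p)^2)^2 - 4*α p*β p*(p:ℂ)^2))‖ * ‖(2*β p*((p:ℂ)^2-(β p)^2)*(p:ℂ))‖ :=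
        norm_mul _ _
      have e3 : ‖(2:ℂ)‖ = 2 := by norm_num
      rw [e1, e2, e3]
      have := mul_le_mul h1 h2 (by positivity) (norm_nonneg _)
      linarith
    rw [norm_div]
    calc ‖_‖ / ‖_‖ ≤ (((‖r2L‖+1)*p^4)^2 * (4*Real.exp (-(δ*bh/2)*p))) / (2*((ε1*p^3)*(‖dL‖/2*p^4))) := by
          apply div_le_div₀ (by positivity) hnum
            (mul_pos two_pos (mul_pos (mul_pos hε1 (pow_pos hp 3))
              (mul_pos (half_pos (norm_pos_iff.mpr hdLne)) (pow_pos hp 4)))) hden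
      _ = (4*(‖r2L‖+1)^2/(2*ε1*(‖dL‖/2))) * (p * Real.exp (-(δ*bh/2)*p)) := by
          obtain ⟨A, hA⟩ : ∃ A:ℝ, A = ‖r2L‖+1 := ⟨_, rfl⟩
          obtain ⟨B, hB⟩ : ∃ B:ℝ, B = ‖dL‖ := ⟨_, rfl⟩
          rw [← hA, ← hB]
          have hd2 : (0:ℝ) < B := hB ▸ norm_pos_iff.mpr hdLne
          field_simp [ne_of_gt hε1, ne_of_gt hp, hd2.ne']
  -- the main terms
  have hTa : Tendsto (fun p : ℝ =>
      ((((p:ℂ)^2+(β p)^2)^2 - 4*α p*β p*(p:ℂ)^2) / (2*β p*((p:ℂ)^2-(β p)^2)*(p:ℂ)))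
        * ((1 - Complex.exp ((-2)*(α p*(δ:ℂ)))*Complex.exp ((-2)*(β p*(δ:ℂ))))/2))
      atTop (nhds (r1L/dL * ((1 - 0*0)/2))) :=
    hr1overD.mul ((tendsto_const_nhds.sub (hE1to0.mul hE2to0)).div_const 2)
  have hTb : Tendsto (fun p : ℝ =>
      ((((p:ℂ)^2+(β p)^2)^2 + 4*α p*β p*(p:ℂ)^2) / (2*β p*((p:ℂ)^2-(β p)^2)*(p:ℂ)))
        * ((Complex.exp ((-2)*(β p*(δ:ℂ))) - Complex.exp ((-2)*(α p*(δ:ℂ))))/2))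
      atTop (nhds (r2L/dL * ((0 - 0)/2))) :=
    hr2overD.mul ((hE2to0.sub hE1to0).div_const 2)
  have hTc : Tendsto (fun p : ℝ =>
      ((((p:ℂ)^2+(β p)^2)^2 - 4*α p*β p*(p:ℂ)^2) / (2*β p*((p:ℂ)^2-(β p)^2)*(p:ℂ)))
        * ((1 - 2*Complex.exp (-(α p*(δ:ℂ) + β p*(δ:ℂ)))
          + Complex.exp ((-2)*(α p*(δ:ℂ)))*Complex.exp ((-2)*(β p*(δ:ℂ))))/2))
      atTop (nhds (r1L/dL * ((1 - 2*0 + 0*0)/2))) :=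
    hr1overD.mul (((tendsto_const_nhds.sub ((tendsto_const_nhds (x := (2:ℂ))).mul hEwto0)).add
      (hE1to0.mul hE2to0)).div_const 2)
  have hsum := ((hTa.sub hTb).add hTc).sub hT4
  have hval : (-(((4*ah*bh - (1+bh^2)^2)/(2*bh*(V/cs)^2) : ℝ):ℂ))
      = r1L/dL * ((1 - 0*0)/2) - r2L/dL * ((0 - 0)/2) + r1L/dL * ((1 - 2*0 + 0*0)/2) - 0 := by
    have h1 : (1-bh^2) = (V/cs)^2 := by rw [div_pow]; linarith
    have hreal : -((4*ah*bh - (1+bh^2)^2)/(2*bh*(V/cs)^2))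
        = ((1+bh^2)^2 - 4*ah*bh)/(2*bh*(1-bh^2)) := by rw [← h1]; ring
    have hsimp : r1L/dL * (((1:ℂ) - 0*0)/2) - r2L/dL * ((0 - 0)/2)
        + r1L/dL * ((1 - 2*0 + 0*0)/2) - 0 = r1L/dL := by ring
    rw [hsimp, ← Complex.ofReal_neg, hreal, hr1Ldef, hdLdef]
    push_cast
    ring
  rw [hval]
  refine hsum.congr' ?_
  filter_upwards [hr1ne, hDne] with p hr1 hD
  have e1 : (α p + β p) * (δ:ℂ) = α p*(δ:ℂ) + β p*(δ:ℂ) := by ring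
  have e2 : (α p - β p) * (δ:ℂ) = α p*(δ:ℂ) - β p*(δ:ℂ) := by ring
  have e3 : -(α p + β p) * (δ:ℂ) = -(α p*(δ:ℂ) + β p*(δ:ℂ)) := by ring
  rw [e1, e2, e3]
  exact (key_id (Complex.exp (-(α p*(δ:ℂ) + β p*(δ:ℂ))))
    (Complex.sinh (α p*(δ:ℂ) + β p*(δ:ℂ))) (Complex.sinh (α p*(δ:ℂ) - β p*(δ:ℂ)))
    (Complex.sinh ((α p*(δ:ℂ) + β p*(δ:ℂ))/2)) (Complex.sinh ((α p*(δ:ℂ) - β p*(δ:ℂ))/2))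
    (((p:ℂ)^2+(β p)^2)^2 - 4*α p*β p*(p:ℂ)^2) (((p:ℂ)^2+(β p)^2)^2 + 4*α p*β p*(p:ℂ)^2)
    (2*β p*((p:ℂ)^2-(β p)^2)*(p:ℂ)) (Complex.exp ((-2)*(α p*(δ:ℂ)))) (Complex.exp ((-2)*(β p*(δ:ℂ))))
    (Complex.exp_ne_zero _) hr1 hD (expL1 _ _) (expL2 _ _) (expL3 _ _) (expL4 _ _)).symm
end
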